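/- arXiv:2308.00977 — 4 statements merged into one kernel-verified Lean document; each statement's English description precedes it below -/
import Mathlib

section
/- There exists a surjective group homomorphism π : W₁ → H₁ (determined by sending x, y, z, α to x, y, z, α respectively and α₁, α₂, α₃, α₄ to 1) whose kernel K has order p⁴ and satisfies K ≤ Z(W₁) and K ≤ [W₁, W₁], where Z(W₁) is the center and [W₁,W₁] the commutator subgroup of W₁. -/
/-- The commutator convention used in the paper: `[a, b] = a⁻¹ * b⁻¹ * a * b`. -/
def pcomm {G : Type*} [Group G] (a b : G) : G := a⁻¹ * b⁻¹ * a * b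

section Helpers
variable {G : Type*} [Group G]

lemma pcomm_mul {a b c : G} (h : pcomm a b = c) : a * b = b * a * c := by
  rw [← h]; unfold pcomm; group

lemma pcomm_eq_one {a b : G} (h : b * a = a * b) : pcomm a b = 1 := by
  unfold pcomm; rw [mul_assoc, ← h]; group

lemma inv_eq_pow_pred {p : ℕ} (hp : 0 < p) {a : G} (h : a ^ p = 1) : a⁻¹ = a ^ (p - 1) := by
  have h2 : a ^ (p - 1) * a = 1 := by
    rw [← pow_succ, Nat.sub_add_cancel hp, h]
  exact (eq_inv_of_mul_eq_one_left h2).symm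

/-- head-merge: `a^i * (a * t) = a^(i+1) * t` -/
lemma hph (a : G) (i : ℕ) (t : G) : a ^ i * (a * t) = a ^ (i + 1) * t := by
  rw [← mul_assoc, ← pow_succ]

/-- head-merge': `a * (a^i * t) = a^(i+1) * t` -/
lemma hph' (a : G) (i : ℕ) (t : G) : a * (a ^ i * t) = a ^ (i + 1) * t := by
  rw [← mul_assoc, ← pow_succ']

/-- pow head merge -/
lemma hpp (a : G) (i j : ℕ) (t : G) : a ^ i * (a ^ j * t) = a ^ (i + j) * t := by
  rw [← mul_assoc, ← pow_add]

/-- commute tail swap -/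
lemma ctail {u v : G} (h : Commute u v) (t : G) : u * (v * t) = v * (u * t) := by
  rw [← mul_assoc, h.eq, mul_assoc]

/-- swap with correction, tail form -/
lemma stail {u v c : G} (h : v * u = u * v * c) (t : G) :
    v * (u * t) = u * (v * (c * t)) := by
  rw [← mul_assoc, h, mul_assoc, mul_assoc]

lemma swap_pow {u v c : G} (h : v * u = u * v * c) (hcv : Commute c v) (k : ℕ) :
    v ^ k * u = u * v ^ k * c ^ k := by
  induction k with
  | zero => simp
  | succ k ih =>
    calc v ^ (k+1) * u = v ^ k * (v * u) := by rw [pow_succ, mul_assoc]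
    _ = v ^ k * u * (v * c) := by rw [h]; group
    _ = u * v ^ k * (c ^ k * v) * c := by rw [ih]; group
    _ = u * v ^ k * (v * c ^ k) * c := by rw [(hcv.pow_left k).eq]
    _ = u * v ^ (k+1) * c ^ (k+1) := by rw [pow_succ, pow_succ]; group

lemma swap_pow_pow {u v c : G} (h : v * u = u * v * c) (hcv : Commute c v)
    (hcu : Commute c u) (k i : ℕ) :
    v ^ k * u ^ i = u ^ i * v ^ k * c ^ (k * i) := by
  induction i with
  | zero => simp
  | succ i ih =>
    calc v ^ k * u ^ (i+1) = v ^ k * u ^ i * u := by rw [pow_succ, mul_assoc]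
    _ = u ^ i * v ^ k * (c ^ (k*i) * u) := by rw [ih]; group
    _ = u ^ i * v ^ k * (u * c ^ (k*i)) := by rw [(hcu.pow_left (k*i)).eq]
    _ = u ^ i * (v ^ k * u) * c ^ (k*i) := by group
    _ = u ^ i * (u * v ^ k * c ^ k) * c ^ (k*i) := by rw [swap_pow h hcv k]
    _ = u ^ (i+1) * v ^ k * c ^ (k * (i+1)) := by
        rw [pow_succ, Nat.mul_succ, pow_add]; group

/-- tail versions -/
lemma stail_pow {u v c : G} (h : v * u = u * v * c) (hcv : Commute c v) (k : ℕ) (t : G) :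
    v ^ k * (u * t) = u * (v ^ k * (c ^ k * t)) := by
  rw [← mul_assoc, swap_pow h hcv k, mul_assoc, mul_assoc]

lemma stail_pow_pow {u v c : G} (h : v * u = u * v * c) (hcv : Commute c v)
    (hcu : Commute c u) (k i : ℕ) (t : G) :
    v ^ k * (u ^ i * t) = u ^ i * (v ^ k * (c ^ (k * i) * t)) := by
  rw [← mul_assoc, swap_pow_pow h hcv hcu k i, mul_assoc, mul_assoc]

end Helpers

section NF
variable {G : Type*} [Group G]

theorem nf_lemma (p : ℕ) (hp : 0 < p) (x y z α a₁ a₂ a₃ a₄ : G)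
    (rxy : pcomm x y = z) (rxz : pcomm x z = a₁) (ryz : pcomm y z = a₂)
    (rxa : pcomm x α = a₃) (rya : pcomm y α = a₄) (rza : pcomm z α = 1)
    (ox : x ^ p = 1) (oy : y ^ p = 1) (oz : z ^ p = 1)
    (o1 : a₁ ^ p = 1) (o2 : a₂ ^ p = 1) (o3 : a₃ ^ p = 1) (o4 : a₄ ^ p = 1)
    (oa : α ^ p ^ 2 = 1)
    (hcm : ∀ c ∈ ({a₁, a₂, a₃, a₄} : Set G), ∀ g ∈ ({x, y, z, α, a₁, a₂, a₃, a₄} : Set G),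
      c * g = g * c) :
    ∀ g ∈ Subgroup.closure ({x, y, z, α, a₁, a₂, a₃, a₄} : Set G),
      ∃ i j k l m n r s : ℕ, i < p ∧ j < p ∧ k < p ∧ l < p ^ 2 ∧ m < p ∧ n < p ∧ r < p ∧ s < p ∧
        g = x ^ i * y ^ j * z ^ k * α ^ l * a₁ ^ m * a₂ ^ n * a₃ ^ r * a₄ ^ s := by
  set S : Set G := {x, y, z, α, a₁, a₂, a₃, a₄} with hS
  set A : Set G := {a₁, a₂, a₃, a₄} with hA
  set M : Submonoid G := Submonoid.closure A with hM
  have hxS : x ∈ S := by simp [hS, hA]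
  have hyS : y ∈ S := by simp [hS, hA]
  have hzS : z ∈ S := by simp [hS, hA]
  have hαS : α ∈ S := by simp [hS, hA]
  have h1S : a₁ ∈ S := by simp [hS, hA]
  have h2S : a₂ ∈ S := by simp [hS, hA]
  have h3S : a₃ ∈ S := by simp [hS, hA]
  have h4S : a₄ ∈ S := by simp [hS, hA]
  have h1A : a₁ ∈ A := by simp [hA]
  have h2A : a₂ ∈ A := by simp [hA]
  have h3A : a₃ ∈ A := by simp [hA]
  have h4A : a₄ ∈ A := by simp [hA]
  have hMcomm : ∀ c ∈ M, ∀ g ∈ S, Commute c g := by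
    intro c hc
    induction hc using Submonoid.closure_induction with
    | mem a ha => intro g hg; exact hcm a ha g hg
    | one => intro g _; exact Commute.one_left g
    | mul c₁ c₂ h₁ h₂ ih₁ ih₂ => intro g hg; exact (ih₁ g hg).mul_left (ih₂ g hg)
  have hc1 : ∀ g ∈ S, Commute a₁ g := fun g hg => hMcomm a₁ (Submonoid.subset_closure h1A) g hg
  have hc2 : ∀ g ∈ S, Commute a₂ g := fun g hg => hMcomm a₂ (Submonoid.subset_closure h2A) g hg
  have hc3 : ∀ g ∈ S, Commute a₃ g := fun g hg => hMcomm a₃ (Submonoid.subset_closure h3A) g hg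
  have hc4 : ∀ g ∈ S, Commute a₄ g := fun g hg => hMcomm a₄ (Submonoid.subset_closure h4A) g hg
  -- base swap relations
  have e1 : z * x = x * z * a₁ ^ (p - 1) := by
    have h := pcomm_mul rxz
    rw [← inv_eq_pow_pred hp o1, h]; group
  have e2 : z * y = y * z * a₂ ^ (p - 1) := by
    have h := pcomm_mul ryz
    rw [← inv_eq_pow_pred hp o2, h]; group
  have e3 : α * x = x * α * a₃ ^ (p - 1) := by
    have h := pcomm_mul rxa
    rw [← inv_eq_pow_pred hp o3, h]; group
  have e4 : α * y = y * α * a₄ ^ (p - 1) := by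
    have h := pcomm_mul rya
    rw [← inv_eq_pow_pred hp o4, h]; group
  have e5 : Commute z α := by
    have h := pcomm_mul rza; rw [mul_one] at h; exact h
  have e6 : y * x = x * y * z ^ (p - 1) := by
    have h := pcomm_mul rxy
    rw [← inv_eq_pow_pred hp oz, h]; group
  -- tail swap lemmas
  have szx : ∀ (k : ℕ) (t : G), z ^ k * (x * t) = x * (z ^ k * ((a₁ ^ (p-1)) ^ k * t)) :=
    fun k t => stail_pow e1 ((hc1 z hzS).pow_left (p-1)) k t
  have szy : ∀ (k : ℕ) (t : G), z ^ k * (y * t) = y * (z ^ k * ((a₂ ^ (p-1)) ^ k * t)) :=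
    fun k t => stail_pow e2 ((hc2 z hzS).pow_left (p-1)) k t
  have sax : ∀ (l : ℕ) (t : G), α ^ l * (x * t) = x * (α ^ l * ((a₃ ^ (p-1)) ^ l * t)) :=
    fun l t => stail_pow e3 ((hc3 α hαS).pow_left (p-1)) l t
  have say : ∀ (l : ℕ) (t : G), α ^ l * (y * t) = y * (α ^ l * ((a₄ ^ (p-1)) ^ l * t)) :=
    fun l t => stail_pow e4 ((hc4 α hαS).pow_left (p-1)) l t
  have szy2 : ∀ (k j : ℕ) (t : G),
      z ^ k * (y ^ j * t) = y ^ j * (z ^ k * ((a₂ ^ (p-1)) ^ (k * j) * t)) :=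
    fun k j t => stail_pow_pow e2 ((hc2 z hzS).pow_left (p-1)) ((hc2 y hyS).pow_left (p-1)) k j t
  have hza : ∀ (l : ℕ) (t : G), α ^ l * (z * t) = z * (α ^ l * t) :=
    fun l t => ctail (e5.symm.pow_left l) t
  have syx : ∀ j : ℕ, ∃ u : ℕ, ∃ c ∈ M, ∀ t : G,
      y ^ j * (x * t) = x * (y ^ j * (z ^ u * (c * t))) := by
    intro j
    induction j with
    | zero => exact ⟨0, 1, one_mem M, fun t => by simp⟩
    | succ j ih =>
      obtain ⟨u, c, hcM, ih⟩ := ih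
      refine ⟨(p-1) + u, (a₂ ^ (p-1)) ^ ((p-1) * j) * c,
        mul_mem (pow_mem (pow_mem (Submonoid.subset_closure h2A) _) _) hcM, fun t => ?_⟩
      calc y ^ (j+1) * (x * t) = y * (y ^ j * (x * t)) := by rw [pow_succ', mul_assoc]
      _ = y * (x * (y ^ j * (z ^ u * (c * t)))) := by rw [ih t]
      _ = x * (y * (z ^ (p-1) * (y ^ j * (z ^ u * (c * t))))) := stail e6 _
      _ = x * (y * (y ^ j * (z ^ (p-1) * ((a₂ ^ (p-1)) ^ ((p-1) * j) * (z ^ u * (c * t)))))) := by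
          rw [szy2 (p-1) j _]
      _ = x * (y ^ (j+1) * (z ^ (p-1) * ((a₂ ^ (p-1)) ^ ((p-1) * j) * (z ^ u * (c * t))))) := by
          rw [hph']
      _ = x * (y ^ (j+1) * (z ^ (p-1) * (z ^ u * ((a₂ ^ (p-1)) ^ ((p-1) * j) * (c * t))))) := by
          rw [ctail (((hc2 z hzS).pow_left (p-1)).pow_left ((p-1)*j) |>.pow_right u)]
      _ = x * (y ^ (j+1) * (z ^ ((p-1) + u) * ((a₂ ^ (p-1)) ^ ((p-1) * j) * (c * t)))) := by
          rw [hpp]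
      _ = x * (y ^ (j+1) * (z ^ ((p-1) + u) * ((a₂ ^ (p-1)) ^ ((p-1) * j) * c * t))) := by
          rw [mul_assoc]
  -- the inductive step over the submonoid closure
  have key : ∀ h ∈ Submonoid.closure S, ∀ g : G,
      (∃ i j k l : ℕ, ∃ c ∈ M, g = x ^ i * (y ^ j * (z ^ k * (α ^ l * c)))) →
      (∃ i j k l : ℕ, ∃ c ∈ M, g * h = x ^ i * (y ^ j * (z ^ k * (α ^ l * c)))) := by
    intro h hh
    induction hh using Submonoid.closure_induction with
    | one => intro g hg; simpa using hg
    | mul h₁ h₂ hh₁ hh₂ ih₁ ih₂ => intro g hg; rw [← mul_assoc]; exact ih₂ _ (ih₁ _ hg)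
    | mem h hh =>
      intro g hg
      obtain ⟨i, j, k, l, c, hcM, rfl⟩ := hg
      simp only [hS, hA, Set.mem_insert_iff, Set.mem_singleton_iff] at hh
      rcases hh with hh | hh | hh | hh | hh | hh | hh | hh <;> rw [hh]
      · -- h = x
        obtain ⟨u, c₂, hc₂M, hyx⟩ := syx j
        refine ⟨i+1, j, u+k, l, c₂ * ((a₁ ^ (p-1)) ^ k * ((a₃ ^ (p-1)) ^ l * c)),
          mul_mem hc₂M (mul_mem (pow_mem (pow_mem (Submonoid.subset_closure h1A) _) _)
            (mul_mem (pow_mem (pow_mem (Submonoid.subset_closure h3A) _) _) hcM)), ?_⟩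
        calc x ^ i * (y ^ j * (z ^ k * (α ^ l * c))) * x
            = x ^ i * (y ^ j * (z ^ k * (α ^ l * (c * x)))) := by simp only [mul_assoc]
        _ = x ^ i * (y ^ j * (z ^ k * (α ^ l * (x * c)))) := by
            rw [(hMcomm c hcM x hxS).eq]
        _ = x ^ i * (y ^ j * (z ^ k * (x * (α ^ l * ((a₃ ^ (p-1)) ^ l * c))))) := by
            rw [sax l c]
        _ = x ^ i * (y ^ j * (x * (z ^ k * ((a₁ ^ (p-1)) ^ k * (α ^ l * ((a₃ ^ (p-1)) ^ l * c)))))) := by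
            rw [szx k _]
        _ = x ^ i * (x * (y ^ j * (z ^ u * (c₂ * (z ^ k * ((a₁ ^ (p-1)) ^ k * (α ^ l * ((a₃ ^ (p-1)) ^ l * c)))))))) := by
            rw [hyx _]
        _ = x ^ (i+1) * (y ^ j * (z ^ u * (c₂ * (z ^ k * ((a₁ ^ (p-1)) ^ k * (α ^ l * ((a₃ ^ (p-1)) ^ l * c))))))) := by
            rw [hph]
        _ = x ^ (i+1) * (y ^ j * (z ^ u * (z ^ k * (c₂ * ((a₁ ^ (p-1)) ^ k * (α ^ l * ((a₃ ^ (p-1)) ^ l * c))))))) := by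
            rw [ctail ((hMcomm c₂ hc₂M z hzS).pow_right k)]
        _ = x ^ (i+1) * (y ^ j * (z ^ (u+k) * (c₂ * ((a₁ ^ (p-1)) ^ k * (α ^ l * ((a₃ ^ (p-1)) ^ l * c)))))) := by
            rw [hpp]
        _ = x ^ (i+1) * (y ^ j * (z ^ (u+k) * (c₂ * (α ^ l * ((a₁ ^ (p-1)) ^ k * ((a₃ ^ (p-1)) ^ l * c)))))) := by
            rw [ctail (((hc1 α hαS).pow_left (p-1)).pow_left k |>.pow_right l)]
        _ = x ^ (i+1) * (y ^ j * (z ^ (u+k) * (α ^ l * (c₂ * ((a₁ ^ (p-1)) ^ k * ((a₃ ^ (p-1)) ^ l * c)))))) := by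
            rw [ctail ((hMcomm c₂ hc₂M α hαS).pow_right l)]
      · -- h = y
        refine ⟨i, j+1, k, l, (a₂ ^ (p-1)) ^ k * ((a₄ ^ (p-1)) ^ l * c),
          mul_mem (pow_mem (pow_mem (Submonoid.subset_closure h2A) _) _)
            (mul_mem (pow_mem (pow_mem (Submonoid.subset_closure h4A) _) _) hcM), ?_⟩
        calc x ^ i * (y ^ j * (z ^ k * (α ^ l * c))) * y
            = x ^ i * (y ^ j * (z ^ k * (α ^ l * (c * y)))) := by simp only [mul_assoc]
        _ = x ^ i * (y ^ j * (z ^ k * (α ^ l * (y * c)))) := by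
            rw [(hMcomm c hcM y hyS).eq]
        _ = x ^ i * (y ^ j * (z ^ k * (y * (α ^ l * ((a₄ ^ (p-1)) ^ l * c))))) := by
            rw [say l c]
        _ = x ^ i * (y ^ j * (y * (z ^ k * ((a₂ ^ (p-1)) ^ k * (α ^ l * ((a₄ ^ (p-1)) ^ l * c)))))) := by
            rw [szy k _]
        _ = x ^ i * (y ^ (j+1) * (z ^ k * ((a₂ ^ (p-1)) ^ k * (α ^ l * ((a₄ ^ (p-1)) ^ l * c))))) := by
            rw [hph]
        _ = x ^ i * (y ^ (j+1) * (z ^ k * (α ^ l * ((a₂ ^ (p-1)) ^ k * ((a₄ ^ (p-1)) ^ l * c))))) := by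
            rw [ctail (((hc2 α hαS).pow_left (p-1)).pow_left k |>.pow_right l)]
      · -- h = z
        refine ⟨i, j, k+1, l, c, hcM, ?_⟩
        calc x ^ i * (y ^ j * (z ^ k * (α ^ l * c))) * z
            = x ^ i * (y ^ j * (z ^ k * (α ^ l * (c * z)))) := by simp only [mul_assoc]
        _ = x ^ i * (y ^ j * (z ^ k * (α ^ l * (z * c)))) := by
            rw [(hMcomm c hcM z hzS).eq]
        _ = x ^ i * (y ^ j * (z ^ k * (z * (α ^ l * c)))) := by rw [hza l c]
        _ = x ^ i * (y ^ j * (z ^ (k+1) * (α ^ l * c))) := by rw [hph]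
      · -- h = α
        refine ⟨i, j, k, l+1, c, hcM, ?_⟩
        calc x ^ i * (y ^ j * (z ^ k * (α ^ l * c))) * α
            = x ^ i * (y ^ j * (z ^ k * (α ^ l * (c * α)))) := by simp only [mul_assoc]
        _ = x ^ i * (y ^ j * (z ^ k * (α ^ l * (α * c)))) := by
            rw [(hMcomm c hcM α hαS).eq]
        _ = x ^ i * (y ^ j * (z ^ k * (α ^ (l+1) * c))) := by rw [hph]
      · exact ⟨i, j, k, l, c * a₁, mul_mem hcM (Submonoid.subset_closure h1A),
          by simp only [mul_assoc]⟩
      · exact ⟨i, j, k, l, c * a₂, mul_mem hcM (Submonoid.subset_closure h2A),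
          by simp only [mul_assoc]⟩
      · exact ⟨i, j, k, l, c * a₃, mul_mem hcM (Submonoid.subset_closure h3A),
          by simp only [mul_assoc]⟩
      · exact ⟨i, j, k, l, c * a₄, mul_mem hcM (Submonoid.subset_closure h4A),
          by simp only [mul_assoc]⟩
  -- from subgroup closure to submonoid closure
  have hSinv : ∀ s ∈ S, s⁻¹ ∈ Submonoid.closure S := by
    intro s hs
    have hp2 : 0 < p ^ 2 := pow_pos hp 2
    have h1 : s ^ (p ^ 2) = 1 := by
      have hs' := hs
      simp only [hS, hA, Set.mem_insert_iff, Set.mem_singleton_iff] at hs'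
      rcases hs' with hs' | hs' | hs' | hs' | hs' | hs' | hs' | hs' <;> rw [hs'] <;>
        first
          | exact oa
          | (rw [pow_two, pow_mul]; simp [ox, oy, oz, o1, o2, o3, o4])
    rw [inv_eq_pow_pred hp2 h1]
    exact pow_mem (Submonoid.subset_closure hs) _
  have hKinv : ∀ {g : G}, g ∈ Submonoid.closure S → g⁻¹ ∈ Submonoid.closure S := by
    intro g hg
    induction hg using Submonoid.closure_induction with
    | mem s hs => exact hSinv s hs
    | one => simpa using one_mem (Submonoid.closure S)
    | mul g₁ g₂ h₁ h₂ ih₁ ih₂ => rw [mul_inv_rev]; exact mul_mem ih₂ ih₁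
  have hsub : ∀ g ∈ Subgroup.closure S, g ∈ Submonoid.closure S := by
    intro g hg
    have hle : Subgroup.closure S ≤
        { toSubmonoid := Submonoid.closure S, inv_mem' := fun {a} ha => hKinv ha } :=
      (Subgroup.closure_le _).2 (fun s hs => Submonoid.subset_closure hs)
    exact hle hg
  -- normal form for elements of M
  have hMnf : ∀ c ∈ M, ∃ m n r s : ℕ, c = a₁ ^ m * (a₂ ^ n * (a₃ ^ r * a₄ ^ s)) := by
    have step : ∀ h ∈ M, ∀ c : G,
        (∃ m n r s : ℕ, c = a₁ ^ m * (a₂ ^ n * (a₃ ^ r * a₄ ^ s))) →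
        (∃ m n r s : ℕ, c * h = a₁ ^ m * (a₂ ^ n * (a₃ ^ r * a₄ ^ s))) := by
      intro h hh
      induction hh using Submonoid.closure_induction with
      | one => intro c hc; simpa using hc
      | mul h₁ h₂ hh₁ hh₂ ih₁ ih₂ => intro c hc; rw [← mul_assoc]; exact ih₂ _ (ih₁ _ hc)
      | mem a ha =>
        intro c hc
        obtain ⟨m, n, r, s, rfl⟩ := hc
        simp only [hA, Set.mem_insert_iff, Set.mem_singleton_iff] at ha
        rcases ha with ha | ha | ha | ha <;> rw [ha]
        · refine ⟨m+1, n, r, s, ?_⟩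
          calc a₁ ^ m * (a₂ ^ n * (a₃ ^ r * a₄ ^ s)) * a₁
              = a₁ ^ m * (a₂ ^ n * (a₃ ^ r * (a₄ ^ s * a₁))) := by simp only [mul_assoc]
          _ = a₁ ^ m * (a₂ ^ n * (a₃ ^ r * (a₁ * a₄ ^ s))) := by
              rw [((hc1 a₄ h4S).symm.pow_left s).eq]
          _ = a₁ ^ m * (a₂ ^ n * (a₁ * (a₃ ^ r * a₄ ^ s))) := by
              rw [ctail ((hc1 a₃ h3S).symm.pow_left r)]
          _ = a₁ ^ m * (a₁ * (a₂ ^ n * (a₃ ^ r * a₄ ^ s))) := by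
              rw [ctail ((hc1 a₂ h2S).symm.pow_left n)]
          _ = a₁ ^ (m+1) * (a₂ ^ n * (a₃ ^ r * a₄ ^ s)) := by rw [hph]
        · refine ⟨m, n+1, r, s, ?_⟩
          calc a₁ ^ m * (a₂ ^ n * (a₃ ^ r * a₄ ^ s)) * a₂
              = a₁ ^ m * (a₂ ^ n * (a₃ ^ r * (a₄ ^ s * a₂))) := by simp only [mul_assoc]
          _ = a₁ ^ m * (a₂ ^ n * (a₃ ^ r * (a₂ * a₄ ^ s))) := by
              rw [((hc2 a₄ h4S).symm.pow_left s).eq]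
          _ = a₁ ^ m * (a₂ ^ n * (a₂ * (a₃ ^ r * a₄ ^ s))) := by
              rw [ctail ((hc2 a₃ h3S).symm.pow_left r)]
          _ = a₁ ^ m * (a₂ ^ (n+1) * (a₃ ^ r * a₄ ^ s)) := by rw [hph]
        · refine ⟨m, n, r+1, s, ?_⟩
          calc a₁ ^ m * (a₂ ^ n * (a₃ ^ r * a₄ ^ s)) * a₃
              = a₁ ^ m * (a₂ ^ n * (a₃ ^ r * (a₄ ^ s * a₃))) := by simp only [mul_assoc]
          _ = a₁ ^ m * (a₂ ^ n * (a₃ ^ r * (a₃ * a₄ ^ s))) := by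
              rw [((hc3 a₄ h4S).symm.pow_left s).eq]
          _ = a₁ ^ m * (a₂ ^ n * (a₃ ^ (r+1) * a₄ ^ s)) := by rw [hph]
        · exact ⟨m, n, r, s+1, by simp only [mul_assoc, ← pow_succ]⟩
    intro c hc
    obtain ⟨m, n, r, s, h⟩ := step c hc 1 ⟨0, 0, 0, 0, by simp⟩
    exact ⟨m, n, r, s, by rwa [one_mul] at h⟩
  -- assemble
  intro g hg
  obtain ⟨i, j, k, l, c, hcM, hEq⟩ :=
    key g (hsub g hg) 1 ⟨0, 0, 0, 0, 1, one_mem M, by simp⟩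
  rw [one_mul] at hEq
  obtain ⟨m, n, r, s, rfl⟩ := hMnf c hcM
  have hp2 : 0 < p ^ 2 := pow_pos hp 2
  refine ⟨i % p, j % p, k % p, l % p ^ 2, m % p, n % p, r % p, s % p,
    Nat.mod_lt _ hp, Nat.mod_lt _ hp, Nat.mod_lt _ hp, Nat.mod_lt _ hp2,
    Nat.mod_lt _ hp, Nat.mod_lt _ hp, Nat.mod_lt _ hp, Nat.mod_lt _ hp, ?_⟩
  rw [hEq, pow_eq_pow_mod i ox, pow_eq_pow_mod j oy, pow_eq_pow_mod k oz,
    pow_eq_pow_mod l oa, pow_eq_pow_mod m o1, pow_eq_pow_mod n o2,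
    pow_eq_pow_mod r o3, pow_eq_pow_mod s o4]
  simp only [mul_assoc]

end NF

lemma prod_pcomm {W H : Type*} [Group W] [Group H] (a b : W) (c d : H) :
    pcomm ((a, c) : W × H) (b, d) = (pcomm a b, pcomm c d) := rfl


/-- `IsW1 p W x y z α a₁ a₂ a₃ a₄` says that `W` is (a copy of) the finite group `W₁`
of order `p ^ 9` with presentation on generators `x, y, z, α, α₁, α₂, α₃, α₄` and relations
`[x,y] = z`, `[x,z] = α₁`, `[y,z] = α₂`, `[x,α] = α₃`, `[y,α] = α₄`, `[z,α] = 1`,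
`x^p = y^p = z^p = α₁^p = α₂^p = α₃^p = α₄^p = 1`, `α^(p²) = 1`, and
`α₁, α₂, α₃, α₄` commute with all generators. -/
def IsW1 (p : ℕ) (W : Type*) [Group W] (x y z α a₁ a₂ a₃ a₄ : W) : Prop :=
  Subgroup.closure {x, y, z, α, a₁, a₂, a₃, a₄} = ⊤ ∧
  Nat.card W = p ^ 9 ∧
  pcomm x y = z ∧ pcomm x z = a₁ ∧ pcomm y z = a₂ ∧
  pcomm x α = a₃ ∧ pcomm y α = a₄ ∧ pcomm z α = 1 ∧
  x ^ p = 1 ∧ y ^ p = 1 ∧ z ^ p = 1 ∧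
  a₁ ^ p = 1 ∧ a₂ ^ p = 1 ∧ a₃ ^ p = 1 ∧ a₄ ^ p = 1 ∧ α ^ p ^ 2 = 1 ∧
  ∀ c ∈ ({a₁, a₂, a₃, a₄} : Set W), ∀ g ∈ ({x, y, z, α, a₁, a₂, a₃, a₄} : Set W),
    c * g = g * c

/-- `IsH1 p H x y z γ` says that `H` is (a copy of) `H₁ = E × C_(p²)`, where `E` is the
extraspecial group of order `p³` and exponent `p` generated by `x, y, z` with
`[x,y] = z`, `[x,z] = [y,z] = 1`, `x^p = y^p = z^p = 1`, and `γ` generates the central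
direct factor `C_(p²)`; so `H` has order `p⁵`. -/
def IsH1 (p : ℕ) (H : Type*) [Group H] (x y z γ : H) : Prop :=
  Subgroup.closure {x, y, z, γ} = ⊤ ∧
  Nat.card H = p ^ 5 ∧
  pcomm x y = z ∧ pcomm x z = 1 ∧ pcomm y z = 1 ∧
  x ^ p = 1 ∧ y ^ p = 1 ∧ z ^ p = 1 ∧ γ ^ p ^ 2 = 1 ∧
  ∀ g ∈ ({x, y, z, γ} : Set H), γ * g = g * γ

set_option maxHeartbeats 1600000 in
/-- There is a surjective homomorphism `π : W₁ → H₁` sending `x, y, z, α` to `x, y, z, γ`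
and `α₁, α₂, α₃, α₄` to `1`, whose kernel `K` has order `p⁴`, is central, and is contained
in the commutator subgroup of `W₁`. -/
theorem stmt_3 (p : ℕ) (hp : p.Prime) (hodd : Odd p)
    (W : Type) [Group W] (x y z α a₁ a₂ a₃ a₄ : W)
    (hW : IsW1 p W x y z α a₁ a₂ a₃ a₄)
    (H : Type) [Group H] (x' y' z' γ : H)
    (hH : IsH1 p H x' y' z' γ) :
    ∃ π : W →* H, Function.Surjective π ∧
      π x = x' ∧ π y = y' ∧ π z = z' ∧ π α = γ ∧
      π a₁ = 1 ∧ π a₂ = 1 ∧ π a₃ = 1 ∧ π a₄ = 1 ∧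
      Nat.card π.ker = p ^ 4 ∧
      π.ker ≤ Subgroup.center W ∧ π.ker ≤ commutator W := by
  obtain ⟨hWcl, hWcard, wxy, wxz, wyz, wxa, wya, wza, wox, woy, woz, wo1, wo2, wo3, wo4, woa,
    wcomm⟩ := hW
  obtain ⟨hHcl, hHcard, hxy, hxz, hyz, hox, hoy, hoz, hog, hgcomm⟩ := hH
  have hp0 : 0 < p := hp.pos
  have hp2 : 0 < p ^ 2 := pow_pos hp0 2
  have hWfin : Finite W := Nat.finite_of_card_ne_zero (by rw [hWcard]; positivity)
  have hHfin : Finite H := Nat.finite_of_card_ne_zero (by rw [hHcard]; positivity)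
  have hγx : γ * x' = x' * γ := hgcomm x' (by simp)
  have hγy : γ * y' = y' * γ := hgcomm y' (by simp)
  have hγz : γ * z' = z' * γ := hgcomm z' (by simp)
  -- normal form in H
  have hHnf : ∀ h : H, ∃ i j k l : ℕ, i < p ∧ j < p ∧ k < p ∧ l < p ^ 2 ∧
      h = x' ^ i * y' ^ j * z' ^ k * γ ^ l := by
    intro h
    have hmem : h ∈ Subgroup.closure ({x', y', z', γ, 1, 1, 1, 1} : Set H) := by
      have hle : Subgroup.closure ({x', y', z', γ} : Set H) ≤
          Subgroup.closure ({x', y', z', γ, 1, 1, 1, 1} : Set H) :=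
        Subgroup.closure_mono (by intro t ht; simp at ht ⊢; tauto)
      rw [hHcl] at hle
      exact hle (Subgroup.mem_top h)
    obtain ⟨i, j, k, l, m, n, r, s, hi, hj, hk, hl, _, _, _, _, hEq⟩ :=
      nf_lemma p hp0 x' y' z' γ 1 1 1 1 hxy hxz hyz (pcomm_eq_one hγx) (pcomm_eq_one hγy)
        (pcomm_eq_one hγz) hox hoy hoz (one_pow p) (one_pow p) (one_pow p) (one_pow p) hog
        (by intro c hc g hg
            simp only [Set.mem_insert_iff, Set.mem_singleton_iff] at hc
            rcases hc with rfl | rfl | rfl | rfl <;> simp) h hmem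
    exact ⟨i, j, k, l, hi, hj, hk, hl, by simpa using hEq⟩
  -- injectivity of the normal form in H
  have cardDom : Nat.card (Fin p × Fin p × Fin p × Fin (p ^ 2)) = p ^ 5 := by
    simp [Nat.card_prod]; ring
  set FH : Fin p × Fin p × Fin p × Fin (p ^ 2) → H :=
    fun t => x' ^ (t.1 : ℕ) * y' ^ (t.2.1 : ℕ) * z' ^ (t.2.2.1 : ℕ) * γ ^ (t.2.2.2 : ℕ)
    with hFH
  have FHsurj : Function.Surjective FH := by
    intro h
    obtain ⟨i, j, k, l, hi, hj, hk, hl, hEq⟩ := hHnf h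
    exact ⟨(⟨i, hi⟩, ⟨j, hj⟩, ⟨k, hk⟩, ⟨l, hl⟩), hEq.symm⟩
  have FHbij : Function.Bijective FH :=
    (Nat.bijective_iff_surjective_and_card FH).2 ⟨FHsurj, by rw [cardDom, hHcard]⟩
  have FHinj0 : ∀ i j k l, i < p → j < p → k < p → l < p ^ 2 →
      x' ^ i * y' ^ j * z' ^ k * γ ^ l = 1 → i = 0 ∧ j = 0 ∧ k = 0 ∧ l = 0 := by
    intro i j k l hi hj hk hl hEq
    have h0 : FH (⟨i, hi⟩, ⟨j, hj⟩, ⟨k, hk⟩, ⟨l, hl⟩) = FH (⟨0, hp0⟩, ⟨0, hp0⟩, ⟨0, hp0⟩, ⟨0, hp2⟩) := by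
      simp only [hFH]; simpa using hEq
    have := FHbij.injective h0
    simpa [Prod.ext_iff, Fin.ext_iff] using this
  -- the graph subgroup
  set SP : Set (W × H) := {(x, x'), (y, y'), (z, z'), (α, γ), (a₁, 1), (a₂, 1), (a₃, 1), (a₄, 1)}
    with hSP
  set Gr : Subgroup (W × H) := Subgroup.closure SP with hGr
  have memSP : ∀ q ∈ SP, q ∈ Gr := fun q hq => Subgroup.subset_closure hq
  have gxy : pcomm ((x, x') : W × H) (y, y') = (z, z') := by
    rw [prod_pcomm, wxy, hxy]
  have gxz : pcomm ((x, x') : W × H) (z, z') = (a₁, 1) := by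
    rw [prod_pcomm, wxz, hxz]
  have gyz : pcomm ((y, y') : W × H) (z, z') = (a₂, 1) := by
    rw [prod_pcomm, wyz, hyz]
  have gxa : pcomm ((x, x') : W × H) (α, γ) = (a₃, 1) := by
    rw [prod_pcomm, wxa, pcomm_eq_one hγx]
  have gya : pcomm ((y, y') : W × H) (α, γ) = (a₄, 1) := by
    rw [prod_pcomm, wya, pcomm_eq_one hγy]
  have gza : pcomm ((z, z') : W × H) (α, γ) = 1 := by
    rw [prod_pcomm, wza, pcomm_eq_one hγz]; rfl
  have ppow : ∀ (a : W) (b : H) (n : ℕ), ((a, b) : W × H) ^ n = (a ^ n, b ^ n) := by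
    intro a b n
    exact Prod.ext (by rw [Prod.pow_fst]) (by rw [Prod.pow_snd])
  have opx : ((x, x') : W × H) ^ p = 1 := by rw [ppow, wox, hox]; rfl
  have opy : ((y, y') : W × H) ^ p = 1 := by rw [ppow, woy, hoy]; rfl
  have opz : ((z, z') : W × H) ^ p = 1 := by rw [ppow, woz, hoz]; rfl
  have opa : ((α, γ) : W × H) ^ p ^ 2 = 1 := by rw [ppow, woa, hog]; rfl
  have op1 : ((a₁, (1 : H)) : W × H) ^ p = 1 := by rw [ppow, wo1, one_pow]; rfl
  have op2 : ((a₂, (1 : H)) : W × H) ^ p = 1 := by rw [ppow, wo2, one_pow]; rfl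
  have op3 : ((a₃, (1 : H)) : W × H) ^ p = 1 := by rw [ppow, wo3, one_pow]; rfl
  have op4 : ((a₄, (1 : H)) : W × H) ^ p = 1 := by rw [ppow, wo4, one_pow]; rfl
  have gcomm : ∀ c ∈ ({(a₁, 1), (a₂, 1), (a₃, 1), (a₄, 1)} : Set (W × H)),
      ∀ g ∈ ({(x, x'), (y, y'), (z, z'), (α, γ), (a₁, 1), (a₂, 1), (a₃, 1), (a₄, 1)} : Set (W × H)),
      c * g = g * c := by
    intro c hc g hg
    simp only [Set.mem_insert_iff, Set.mem_singleton_iff] at hc hg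
    rcases hc with rfl | rfl | rfl | rfl <;>
      rcases hg with rfl | rfl | rfl | rfl | rfl | rfl | rfl | rfl <;>
      exact Prod.ext (wcomm _ (by simp) _ (by simp)) (by simp)
  have grnf := nf_lemma p hp0 ((x, x') : W × H) (y, y') (z, z') (α, γ) (a₁, 1) (a₂, 1) (a₃, 1)
    (a₄, 1) gxy gxz gyz gxa gya gza opx opy opz op1 op2 op3 op4 opa gcomm
  -- bound the size of the graph subgroup
  have cardDom9 : Nat.card (Fin p × Fin p × Fin p × Fin (p ^ 2) ×
      Fin p × Fin p × Fin p × Fin p) = p ^ 9 := by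
    simp [Nat.card_prod]; ring
  set FG : (Fin p × Fin p × Fin p × Fin (p ^ 2) × Fin p × Fin p × Fin p × Fin p) → ↥Gr :=
    fun t => ⟨((x, x') : W × H) ^ (t.1 : ℕ) * (y, y') ^ (t.2.1 : ℕ) * (z, z') ^ (t.2.2.1 : ℕ) *
        (α, γ) ^ (t.2.2.2.1 : ℕ) * (a₁, 1) ^ (t.2.2.2.2.1 : ℕ) * (a₂, 1) ^ (t.2.2.2.2.2.1 : ℕ) *
        (a₃, 1) ^ (t.2.2.2.2.2.2.1 : ℕ) * (a₄, 1) ^ (t.2.2.2.2.2.2.2 : ℕ),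
      mul_mem (mul_mem (mul_mem (mul_mem (mul_mem (mul_mem (mul_mem
        (pow_mem (memSP _ (by simp [hSP])) _) (pow_mem (memSP _ (by simp [hSP])) _))
        (pow_mem (memSP _ (by simp [hSP])) _)) (pow_mem (memSP _ (by simp [hSP])) _))
        (pow_mem (memSP _ (by simp [hSP])) _)) (pow_mem (memSP _ (by simp [hSP])) _))
        (pow_mem (memSP _ (by simp [hSP])) _)) (pow_mem (memSP _ (by simp [hSP])) _)⟩
    with hFG
  have FGsurj : Function.Surjective FG := by
    rintro ⟨g, hg⟩
    obtain ⟨i, j, k, l, m, n, r, s, hi, hj, hk, hl, hm, hn, hr, hs, hEq⟩ := grnf g hg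
    exact ⟨(⟨i, hi⟩, ⟨j, hj⟩, ⟨k, hk⟩, ⟨l, hl⟩, ⟨m, hm⟩, ⟨n, hn⟩, ⟨r, hr⟩, ⟨s, hs⟩),
      Subtype.ext hEq.symm⟩
  have cardGrLe : Nat.card ↥Gr ≤ p ^ 9 := by
    rw [← cardDom9]
    exact Nat.card_le_card_of_surjective FG FGsurj
  -- first projection is bijective on the graph
  set φ : ↥Gr →* W := (MonoidHom.fst W H).comp Gr.subtype with hφ
  have φsurj : Function.Surjective φ := by
    have hle : Subgroup.closure ({x, y, z, α, a₁, a₂, a₃, a₄} : Set W) ≤ φ.range := by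
      rw [Subgroup.closure_le]
      intro s hs
      simp only [Set.mem_insert_iff, Set.mem_singleton_iff] at hs
      rcases hs with rfl | rfl | rfl | rfl | rfl | rfl | rfl | rfl
      · exact ⟨⟨(s, x'), memSP _ (by simp [hSP])⟩, rfl⟩
      · exact ⟨⟨(s, y'), memSP _ (by simp [hSP])⟩, rfl⟩
      · exact ⟨⟨(s, z'), memSP _ (by simp [hSP])⟩, rfl⟩
      · exact ⟨⟨(s, γ), memSP _ (by simp [hSP])⟩, rfl⟩
      · exact ⟨⟨(s, 1), memSP _ (by simp [hSP])⟩, rfl⟩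
      · exact ⟨⟨(s, 1), memSP _ (by simp [hSP])⟩, rfl⟩
      · exact ⟨⟨(s, 1), memSP _ (by simp [hSP])⟩, rfl⟩
      · exact ⟨⟨(s, 1), memSP _ (by simp [hSP])⟩, rfl⟩
    rw [hWcl] at hle
    intro w
    exact hle (Subgroup.mem_top w)
  have cardGr : Nat.card ↥Gr = p ^ 9 :=
    le_antisymm cardGrLe (by rw [← hWcard]; exact Nat.card_le_card_of_surjective φ φsurj)
  have φbij : Function.Bijective φ :=
    (Nat.bijective_iff_surjective_and_card φ).2 ⟨φsurj, by rw [cardGr, hWcard]⟩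
  set e : ↥Gr ≃* W := MulEquiv.ofBijective φ φbij with he
  set π : W →* H := ((MonoidHom.snd W H).comp Gr.subtype).comp e.symm.toMonoidHom with hπdef
  have hπval : ∀ (a : W) (b : H), (a, b) ∈ Gr → π a = b := by
    intro a b hab
    have h1 : e ⟨(a, b), hab⟩ = a := rfl
    have h2 : e.symm a = ⟨(a, b), hab⟩ :=
      e.injective (by rw [MulEquiv.apply_symm_apply]; exact h1.symm)
    show ((e.symm a : ↥Gr) : W × H).2 = b
    rw [h2]
  have hπx : π x = x' := hπval x x' (memSP _ (by simp [hSP]))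
  have hπy : π y = y' := hπval y y' (memSP _ (by simp [hSP]))
  have hπz : π z = z' := hπval z z' (memSP _ (by simp [hSP]))
  have hπα : π α = γ := hπval α γ (memSP _ (by simp [hSP]))
  have hπ1 : π a₁ = 1 := hπval a₁ 1 (memSP _ (by simp [hSP]))
  have hπ2 : π a₂ = 1 := hπval a₂ 1 (memSP _ (by simp [hSP]))
  have hπ3 : π a₃ = 1 := hπval a₃ 1 (memSP _ (by simp [hSP]))
  have hπ4 : π a₄ = 1 := hπval a₄ 1 (memSP _ (by simp [hSP]))
  have πsurj : Function.Surjective π := by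
    have hle : Subgroup.closure ({x', y', z', γ} : Set H) ≤ π.range := by
      rw [Subgroup.closure_le]
      intro s hs
      simp only [Set.mem_insert_iff, Set.mem_singleton_iff] at hs
      rcases hs with rfl | rfl | rfl | rfl
      · exact ⟨x, hπx⟩
      · exact ⟨y, hπy⟩
      · exact ⟨z, hπz⟩
      · exact ⟨α, hπα⟩
    rw [hHcl] at hle
    intro h
    exact hle (Subgroup.mem_top h)
  -- kernel analysis
  have kerNF : ∀ w ∈ π.ker, ∃ m n r s : ℕ,
      w = a₁ ^ m * a₂ ^ n * a₃ ^ r * a₄ ^ s := by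
    intro w hw
    have hw1 : π w = 1 := hw
    have hgw : ((e.symm w : ↥Gr) : W × H).1 = w := by
      have h3 : φ (e.symm w) = w := e.apply_symm_apply w
      exact h3
    have hgh : ((e.symm w : ↥Gr) : W × H).2 = 1 := hw1
    obtain ⟨i, j, k, l, m, n, r, s, hi, hj, hk, hl, hm, hn, hr, hs, hEq⟩ :=
      grnf ((e.symm w : ↥Gr) : W × H) (e.symm w).2
    have hEq1 := congrArg Prod.fst hEq
    have hEq2 := congrArg Prod.snd hEq
    simp only [Prod.fst_mul, Prod.snd_mul, Prod.pow_fst, Prod.pow_snd] at hEq1 hEq2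
    rw [hgw] at hEq1
    rw [hgh] at hEq2
    simp only [one_pow, mul_one] at hEq2
    obtain ⟨hi0, hj0, hk0, hl0⟩ := FHinj0 i j k l hi hj hk hl hEq2.symm
    subst hi0; subst hj0; subst hk0; subst hl0
    refine ⟨m, n, r, s, ?_⟩
    simpa using hEq1
  have central : ∀ a : W,
      (∀ s ∈ ({x, y, z, α, a₁, a₂, a₃, a₄} : Set W), a * s = s * a) →
      a ∈ Subgroup.center W := by
    intro a ha
    rw [Subgroup.mem_center_iff]
    intro h
    have hh : h ∈ Subgroup.closure ({x, y, z, α, a₁, a₂, a₃, a₄} : Set W) := by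
      rw [hWcl]; exact Subgroup.mem_top h
    induction hh using Subgroup.closure_induction with
    | mem s hs => exact (ha s hs).symm
    | one => simp
    | mul s t hs ht ihs iht => rw [mul_assoc, iht, ← mul_assoc, ihs, mul_assoc]
    | inv s hs ih =>
      have ihc : Commute s a := (by exact ih : s * a = a * s)
      exact (ihc.inv_left).eq
  have hc1c : a₁ ∈ Subgroup.center W := central a₁ (fun s hs => wcomm a₁ (by simp) s hs)
  have hc2c : a₂ ∈ Subgroup.center W := central a₂ (fun s hs => wcomm a₂ (by simp) s hs)
  have hc3c : a₃ ∈ Subgroup.center W := central a₃ (fun s hs => wcomm a₃ (by simp) s hs)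
  have hc4c : a₄ ∈ Subgroup.center W := central a₄ (fun s hs => wcomm a₄ (by simp) s hs)
  have hkerCenter : π.ker ≤ Subgroup.center W := by
    intro w hw
    obtain ⟨m, n, r, s, rfl⟩ := kerNF w hw
    exact mul_mem (mul_mem (mul_mem (pow_mem hc1c m) (pow_mem hc2c n)) (pow_mem hc3c r))
      (pow_mem hc4c s)
  have hcommutator : ∀ (a b c : W), pcomm a b = c → c ∈ commutator W := by
    intro a b c hc
    open scoped commutatorElement in
    have h1 : ⁅a⁻¹, b⁻¹⁆ = c := by
      rw [← hc]; simp [commutatorElement_def, pcomm]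
    rw [commutator_def, ← h1]
    exact Subgroup.commutator_mem_commutator (Subgroup.mem_top _) (Subgroup.mem_top _)
  have hkerComm : π.ker ≤ commutator W := by
    intro w hw
    obtain ⟨m, n, r, s, rfl⟩ := kerNF w hw
    exact mul_mem (mul_mem (mul_mem (pow_mem (hcommutator x z a₁ wxz) m)
      (pow_mem (hcommutator y z a₂ wyz) n)) (pow_mem (hcommutator x α a₃ wxa) r))
      (pow_mem (hcommutator y α a₄ wya) s)
  have hkerCard : Nat.card π.ker = p ^ 4 := by
    have hq : Nat.card (W ⧸ π.ker) = p ^ 5 := by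
      rw [Nat.card_congr (QuotientGroup.quotientKerEquivOfSurjective π πsurj).toEquiv, hHcard]
    have hWq : Nat.card W = p ^ 5 * Nat.card π.ker := by
      rw [Subgroup.card_eq_card_quotient_mul_card_subgroup π.ker, hq]
    have h9 : p ^ 5 * p ^ 4 = p ^ 5 * Nat.card π.ker := by
      rw [← hWq, hWcard, ← pow_add]
    exact (Nat.eq_of_mul_eq_mul_left (pow_pos hp0 5) h9).symm
  exact ⟨π, πsurj, hπx, hπy, hπz, hπα, hπ1, hπ2, hπ3, hπ4, hkerCard, hkerCenter, hkerComm⟩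
end

section
/- There exists a surjective group homomorphism π : W₂ → H₂ (determined by sending α, α₁, α₂ to the corresponding generators of the first factor of H₂, α₃ to a generator of the C_p factor, and x, y, z, w to 1) whose kernel K has order p⁴ and satisfies K ≤ Z(W₂) and K ≤ [W₂, W₂], where Z(W₂) is the center and [W₂,W₂] the commutator subgroup of W₂. -/
/-- `IsW2 p W α α₁ α₂ α₃ x y z w` says that `W` is (a copy of) the finite group `W₂`
of order `p ^ 9` with presentation on generators `α, α₁, α₂, α₃, x, y, z, w` and relations
`[α₁,α] = α₂`, `[α₁,α₂] = x`, `[α,α₂] = y`, `[α₃,α₁] = z`, `[α₃,α] = w`, `[α₃,α₂] = 1`,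
`α^(p²) = 1`, `α₁^p = α₂^p = α₃^p = 1`, `x^p = y^p = z^p = w^p = 1`, and
`x, y, z, w` commute with all generators. -/
def IsW2 (p : ℕ) (W : Type*) [Group W] (α a₁ a₂ a₃ x y z w : W) : Prop :=
  Subgroup.closure {α, a₁, a₂, a₃, x, y, z, w} = ⊤ ∧
  Nat.card W = p ^ 9 ∧
  pcomm a₁ α = a₂ ∧ pcomm a₁ a₂ = x ∧ pcomm α a₂ = y ∧
  pcomm a₃ a₁ = z ∧ pcomm a₃ α = w ∧ pcomm a₃ a₂ = 1 ∧
  α ^ p ^ 2 = 1 ∧ a₁ ^ p = 1 ∧ a₂ ^ p = 1 ∧ a₃ ^ p = 1 ∧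
  x ^ p = 1 ∧ y ^ p = 1 ∧ z ^ p = 1 ∧ w ^ p = 1 ∧
  ∀ c ∈ ({x, y, z, w} : Set W), ∀ g ∈ ({α, a₁, a₂, a₃, x, y, z, w} : Set W),
    c * g = g * c

/-- `IsH2 p H α α₁ α₂ b` says that `H` is (a copy of) `H₂ = K × C_p`, where `K` is the
group of order `p⁴` generated by `α, α₁, α₂` with `[α₁,α] = α₂`, `[α₁,α₂] = [α,α₂] = 1`,
`α^(p²) = α₁^p = α₂^p = 1`, and `b` generates the central direct factor `C_p`;
so `H` has order `p⁵`. -/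
def IsH2 (p : ℕ) (H : Type*) [Group H] (α a₁ a₂ b : H) : Prop :=
  Subgroup.closure {α, a₁, a₂, b} = ⊤ ∧
  Nat.card H = p ^ 5 ∧
  pcomm a₁ α = a₂ ∧ pcomm a₁ a₂ = 1 ∧ pcomm α a₂ = 1 ∧
  α ^ p ^ 2 = 1 ∧ a₁ ^ p = 1 ∧ a₂ ^ p = 1 ∧ b ^ p = 1 ∧
  ∀ g ∈ ({α, a₁, a₂, b} : Set H), b * g = g * b

section AuxHelpers

variable {G : Type*} [Group G]

private lemma pow_mod_eq {g : G} {m : ℕ} (h : g ^ m = 1) (n : ℕ) :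
    g ^ n = g ^ (n % m) := by
  conv_lhs => rw [← Nat.div_add_mod n m, pow_add, pow_mul, h, one_pow, one_mul]

private lemma inv_pow_eq {g : G} {p : ℕ} (hp : 0 < p) (h : g ^ p = 1) (m : ℕ) :
    (g ^ m)⁻¹ = g ^ (m * (p - 1)) := by
  have harith : m * (p - 1) + m = m * p := by
    obtain ⟨q, rfl⟩ := Nat.exists_eq_add_of_lt hp
    simp [Nat.add_sub_cancel]; ring
  have : g ^ (m * (p - 1)) * g ^ m = 1 := by
    rw [← pow_add, harith, mul_comm m p, pow_mul, h, one_pow]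
  exact inv_eq_of_mul_eq_one_left this

private lemma commute_of_pcomm {u v : G} (h : pcomm u v = 1) : Commute u v := by
  have h2 : u * v = v * u * (u⁻¹ * v⁻¹ * u * v) := by group
  rw [show u⁻¹ * v⁻¹ * u * v = pcomm u v from rfl, h, mul_one] at h2
  exact h2

private lemma pcomm_eq_one_of_commute {u v : G} (h : u * v = v * u) : pcomm u v = 1 := by
  rw [pcomm, show u⁻¹ * v⁻¹ * u * v = u⁻¹ * v⁻¹ * (u * v) by group, h]
  group

private lemma mul_eq_of_pcomm {u v c : G} (h : pcomm u v = c) : u * v = v * (u * c) := by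
  rw [← h, pcomm]; group

private lemma map_pcomm {H : Type*} [Group H] (f : G →* H) (a b : G) :
    f (pcomm a b) = pcomm (f a) (f b) := by simp [pcomm]

open scoped commutatorElement in
private lemma pcomm_mem_commutator (u v : G) : pcomm u v ∈ commutator G := by
  rw [commutator_def]
  rw [show pcomm u v = ⁅u⁻¹, v⁻¹⁆ by rw [commutatorElement_def, pcomm]; group]
  exact Subgroup.commutator_mem_commutator (Subgroup.mem_top _) (Subgroup.mem_top _)

private lemma collect4 {Q : Type*} [Group Q] {p : ℕ} (hp : 0 < p)
    {A B C D : Q} (hgen : Subgroup.closure {A, B, C, D} = ⊤)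
    (hBA : B * A = A * (B * C))
    (hCA : Commute C A) (hCB : Commute C B) (hCD : Commute C D)
    (hDA : Commute D A) (hDB : Commute D B)
    (hA : A ^ p ^ 2 = 1) (hB : B ^ p = 1) (hC : C ^ p = 1) (hD : D ^ p = 1) :
    Finite Q ∧ Nat.card Q ≤ p ^ 5 := by
  have hp2 : 0 < p ^ 2 := by positivity
  have step1 : ∀ n : ℕ, B * A ^ n = A ^ n * (B * C ^ n) := by
    intro n; induction n with
    | zero => simp
    | succ n ih =>
      calc B * A ^ (n + 1) = B * A ^ n * A := by rw [pow_succ, mul_assoc]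
        _ = A ^ n * (B * (C ^ n * A)) := by rw [ih]; simp [mul_assoc]
        _ = A ^ n * (B * (A * C ^ n)) := by rw [(hCA.pow_left n).eq]
        _ = A ^ n * ((B * A) * C ^ n) := by simp [mul_assoc]
        _ = A ^ n * ((A * (B * C)) * C ^ n) := by rw [hBA]
        _ = A ^ (n + 1) * (B * C ^ (n + 1)) := by
            rw [pow_succ A, pow_succ' C]; simp [mul_assoc]
  have step2 : ∀ j n : ℕ, B ^ j * A ^ n = A ^ n * (B ^ j * C ^ (n * j)) := by
    intro j; induction j with
    | zero => intro n; simp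
    | succ j ih =>
      intro n
      calc B ^ (j + 1) * A ^ n = B ^ j * (B * A ^ n) := by rw [pow_succ, mul_assoc]
        _ = B ^ j * (A ^ n * (B * C ^ n)) := by rw [step1]
        _ = (B ^ j * A ^ n) * (B * C ^ n) := by simp [mul_assoc]
        _ = A ^ n * (B ^ j * C ^ (n * j)) * (B * C ^ n) := by rw [ih]
        _ = A ^ n * (B ^ j * ((C ^ (n * j) * B) * C ^ n)) := by simp [mul_assoc]
        _ = A ^ n * (B ^ j * ((B * C ^ (n * j)) * C ^ n)) := by
            rw [(hCB.pow_left (n * j)).eq]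
        _ = A ^ n * (B ^ (j + 1) * C ^ (n * (j + 1))) := by
            rw [pow_succ B, Nat.mul_succ, pow_add]; simp [mul_assoc]
  have hprod : ∀ i j k l i' j' k' l' : ℕ,
      (A ^ i * B ^ j * C ^ k * D ^ l) * (A ^ i' * B ^ j' * C ^ k' * D ^ l') =
      A ^ (i + i') * B ^ (j + j') * C ^ (i' * j + (k + k')) * D ^ (l + l') := by
    intro i j k l i' j' k' l'
    have cDA : ∀ m n : ℕ, D ^ m * A ^ n = A ^ n * D ^ m := fun m n => (hDA.pow_pow m n).eq
    have cDB : ∀ m n : ℕ, D ^ m * B ^ n = B ^ n * D ^ m := fun m n => (hDB.pow_pow m n).eq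
    have cDC : ∀ m n : ℕ, D ^ m * C ^ n = C ^ n * D ^ m := fun m n => ((hCD.symm).pow_pow m n).eq
    have cCA : ∀ m n : ℕ, C ^ m * A ^ n = A ^ n * C ^ m := fun m n => (hCA.pow_pow m n).eq
    have cCB : ∀ m n : ℕ, C ^ m * B ^ n = B ^ n * C ^ m := fun m n => (hCB.pow_pow m n).eq
    calc (A ^ i * B ^ j * C ^ k * D ^ l) * (A ^ i' * B ^ j' * C ^ k' * D ^ l')
        = A ^ i * (B ^ j * (C ^ k * ((D ^ l * A ^ i') * (B ^ j' * (C ^ k' * D ^ l'))))) := by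
          simp [mul_assoc]
      _ = A ^ i * (B ^ j * (C ^ k * (A ^ i' * ((D ^ l * B ^ j') * (C ^ k' * D ^ l'))))) := by
          rw [cDA]; simp [mul_assoc]
      _ = A ^ i * (B ^ j * (C ^ k * (A ^ i' * (B ^ j' * ((D ^ l * C ^ k') * D ^ l'))))) := by
          rw [cDB]; simp [mul_assoc]
      _ = A ^ i * (B ^ j * ((C ^ k * A ^ i') * (B ^ j' * (C ^ k' * (D ^ l * D ^ l'))))) := by
          rw [cDC]; simp [mul_assoc]
      _ = A ^ i * ((B ^ j * A ^ i') * ((C ^ k * B ^ j') * (C ^ k' * D ^ (l + l')))) := by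
          rw [cCA, pow_add]; simp [mul_assoc]
      _ = A ^ i * ((A ^ i' * (B ^ j * C ^ (i' * j))) * (B ^ j' * (C ^ k * (C ^ k' * D ^ (l + l'))))) := by
          rw [step2, cCB]; simp [mul_assoc]
      _ = A ^ i * (A ^ i' * (B ^ j * ((C ^ (i' * j) * B ^ j') * C ^ (k + k') * D ^ (l + l')))) := by
          simp [pow_add, mul_assoc]
      _ = A ^ i * (A ^ i' * (B ^ j * (B ^ j' * (C ^ (i' * j) * C ^ (k + k') * D ^ (l + l'))))) := by
          rw [cCB]; simp [mul_assoc]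
      _ = A ^ (i + i') * B ^ (j + j') * C ^ (i' * j + (k + k')) * D ^ (l + l') := by
          rw [pow_add A, pow_add B, pow_add C (i' * j)]; simp [mul_assoc]
  set P : Q → Prop := fun g => ∃ i j k l : ℕ, g = A ^ i * B ^ j * C ^ k * D ^ l with hP
  have hmulP : ∀ {g h : Q}, P g → P h → P (g * h) := by
    rintro g h ⟨i, j, k, l, rfl⟩ ⟨i', j', k', l', rfl⟩
    exact ⟨_, _, _, _, hprod i j k l i' j' k' l'⟩
  have hApow : ∀ m : ℕ, P (A ^ m) := fun m => ⟨m, 0, 0, 0, by simp⟩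
  have hBpow : ∀ m : ℕ, P (B ^ m) := fun m => ⟨0, m, 0, 0, by simp⟩
  have hCpow : ∀ m : ℕ, P (C ^ m) := fun m => ⟨0, 0, m, 0, by simp⟩
  have hDpow : ∀ m : ℕ, P (D ^ m) := fun m => ⟨0, 0, 0, m, by simp⟩
  have hinvP : ∀ {g : Q}, P g → P g⁻¹ := by
    rintro g ⟨i, j, k, l, rfl⟩
    have heq : (A ^ i * B ^ j * C ^ k * D ^ l)⁻¹ =
        D ^ (l * (p - 1)) * C ^ (k * (p - 1)) * (B ^ (j * (p - 1)) * A ^ (i * (p ^ 2 - 1))) := by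
      rw [mul_inv_rev, mul_inv_rev, mul_inv_rev, inv_pow_eq hp hD, inv_pow_eq hp hC,
        inv_pow_eq hp hB, inv_pow_eq hp2 hA]
      simp [mul_assoc]
    rw [heq]
    exact hmulP (hmulP (hDpow _) (hCpow _)) (hmulP (hBpow _) (hApow _))
  set T : Subgroup Q :=
    { carrier := setOf P
      one_mem' := ⟨0, 0, 0, 0, by simp⟩
      mul_mem' := fun hg hh => hmulP hg hh
      inv_mem' := fun hg => hinvP hg } with hT
  have hTtop : ∀ g : Q, P g := by
    have hle : Subgroup.closure {A, B, C, D} ≤ T := by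
      rw [Subgroup.closure_le]
      rintro g (rfl | rfl | rfl | rfl)
      · exact ⟨1, 0, 0, 0, by simp⟩
      · exact ⟨0, 1, 0, 0, by simp⟩
      · exact ⟨0, 0, 1, 0, by simp⟩
      · exact ⟨0, 0, 0, 1, by simp⟩
    intro g
    exact hle (hgen ▸ Subgroup.mem_top g)
  set f : Fin (p ^ 2) × Fin p × Fin p × Fin p → Q :=
    fun t => A ^ (t.1 : ℕ) * B ^ (t.2.1 : ℕ) * C ^ (t.2.2.1 : ℕ) * D ^ (t.2.2.2 : ℕ) with hf
  have hfsurj : Function.Surjective f := by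
    intro g
    obtain ⟨i, j, k, l, rfl⟩ := hTtop g
    refine ⟨(⟨i % p ^ 2, Nat.mod_lt _ hp2⟩, ⟨j % p, Nat.mod_lt _ hp⟩,
      ⟨k % p, Nat.mod_lt _ hp⟩, ⟨l % p, Nat.mod_lt _ hp⟩), ?_⟩
    simp only [hf]
    rw [← pow_mod_eq hA, ← pow_mod_eq hB, ← pow_mod_eq hC, ← pow_mod_eq hD]
  have hfin : Finite Q := Finite.of_surjective f hfsurj
  refine ⟨hfin, ?_⟩
  calc Nat.card Q ≤ Nat.card (Fin (p ^ 2) × Fin p × Fin p × Fin p) :=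
      Nat.card_le_card_of_surjective f hfsurj
    _ = p ^ 5 := by simp [Nat.card_prod]; ring

private lemma abelian4 {Q : Type*} [Group Q] {p : ℕ} (hp : 0 < p) [Finite Q] {x y z w : Q}
    (hxy : Commute x y) (hxz : Commute x z) (hxw : Commute x w)
    (hyz : Commute y z) (hyw : Commute y w) (hzw : Commute z w)
    (hx : x ^ p = 1) (hy : y ^ p = 1) (hz : z ^ p = 1) (hw : w ^ p = 1) :
    Nat.card (Subgroup.closure {x, y, z, w} : Subgroup Q) ≤ p ^ 4 := by
  have hprod : ∀ a b c d a' b' c' d' : ℕ,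
      (x ^ a * y ^ b * z ^ c * w ^ d) * (x ^ a' * y ^ b' * z ^ c' * w ^ d') =
      x ^ (a + a') * y ^ (b + b') * z ^ (c + c') * w ^ (d + d') := by
    intro a b c d a' b' c' d'
    have c1 : ∀ m n : ℕ, y ^ m * x ^ n = x ^ n * y ^ m := fun m n => (hxy.symm.pow_pow m n).eq
    have c2 : ∀ m n : ℕ, z ^ m * x ^ n = x ^ n * z ^ m := fun m n => (hxz.symm.pow_pow m n).eq
    have c3 : ∀ m n : ℕ, w ^ m * x ^ n = x ^ n * w ^ m := fun m n => (hxw.symm.pow_pow m n).eq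
    have c4 : ∀ m n : ℕ, z ^ m * y ^ n = y ^ n * z ^ m := fun m n => (hyz.symm.pow_pow m n).eq
    have c5 : ∀ m n : ℕ, w ^ m * y ^ n = y ^ n * w ^ m := fun m n => (hyw.symm.pow_pow m n).eq
    have c6 : ∀ m n : ℕ, w ^ m * z ^ n = z ^ n * w ^ m := fun m n => (hzw.symm.pow_pow m n).eq
    have c1' : ∀ (m n : ℕ) (t : Q), y ^ m * (x ^ n * t) = x ^ n * (y ^ m * t) := by
      intro m n t; rw [← mul_assoc, c1, mul_assoc]
    have c2' : ∀ (m n : ℕ) (t : Q), z ^ m * (x ^ n * t) = x ^ n * (z ^ m * t) := by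
      intro m n t; rw [← mul_assoc, c2, mul_assoc]
    have c3' : ∀ (m n : ℕ) (t : Q), w ^ m * (x ^ n * t) = x ^ n * (w ^ m * t) := by
      intro m n t; rw [← mul_assoc, c3, mul_assoc]
    have c4' : ∀ (m n : ℕ) (t : Q), z ^ m * (y ^ n * t) = y ^ n * (z ^ m * t) := by
      intro m n t; rw [← mul_assoc, c4, mul_assoc]
    have c5' : ∀ (m n : ℕ) (t : Q), w ^ m * (y ^ n * t) = y ^ n * (w ^ m * t) := by
      intro m n t; rw [← mul_assoc, c5, mul_assoc]
    have c6' : ∀ (m n : ℕ) (t : Q), w ^ m * (z ^ n * t) = z ^ n * (w ^ m * t) := by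
      intro m n t; rw [← mul_assoc, c6, mul_assoc]
    simp only [pow_add, mul_assoc, c1, c2, c3, c4, c5, c6, c1', c2', c3', c4', c5', c6']
  set P : Q → Prop := fun g => ∃ a b c d : ℕ, g = x ^ a * y ^ b * z ^ c * w ^ d with hP
  have hmulP : ∀ {g h : Q}, P g → P h → P (g * h) := by
    rintro g h ⟨a, b, c, d, rfl⟩ ⟨a', b', c', d', rfl⟩
    exact ⟨_, _, _, _, hprod a b c d a' b' c' d'⟩
  have hinvP : ∀ {g : Q}, P g → P g⁻¹ := by
    rintro g ⟨a, b, c, d, rfl⟩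
    refine ⟨a * (p - 1), b * (p - 1), c * (p - 1), d * (p - 1), ?_⟩
    have key : (x ^ a * y ^ b * z ^ c * w ^ d) *
        (x ^ (a * (p - 1)) * y ^ (b * (p - 1)) * z ^ (c * (p - 1)) * w ^ (d * (p - 1))) = 1 := by
      rw [hprod]
      have e : ∀ m : ℕ, m + m * (p - 1) = m * p := by
        intro m
        obtain ⟨q, rfl⟩ := Nat.exists_eq_add_of_lt hp
        simp [Nat.add_sub_cancel]; ring
      rw [e, e, e, e, mul_comm a p, mul_comm b p, mul_comm c p, mul_comm d p,
        pow_mul, pow_mul, pow_mul, pow_mul, hx, hy, hz, hw]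
      simp
    exact (inv_eq_of_mul_eq_one_right key).symm ▸ (inv_eq_of_mul_eq_one_right key)
  set T : Subgroup Q :=
    { carrier := setOf P
      one_mem' := ⟨0, 0, 0, 0, by simp⟩
      mul_mem' := fun hg hh => hmulP hg hh
      inv_mem' := fun hg => hinvP hg } with hT
  have hle : Subgroup.closure {x, y, z, w} ≤ T := by
    rw [Subgroup.closure_le]
    rintro g (rfl | rfl | rfl | rfl)
    · exact ⟨1, 0, 0, 0, by simp⟩
    · exact ⟨0, 1, 0, 0, by simp⟩
    · exact ⟨0, 0, 1, 0, by simp⟩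
    · exact ⟨0, 0, 0, 1, by simp⟩
  refine le_trans (Subgroup.card_le_of_le hle) ?_
  set f : Fin p × Fin p × Fin p × Fin p → T :=
    fun t => ⟨x ^ (t.1 : ℕ) * y ^ (t.2.1 : ℕ) * z ^ (t.2.2.1 : ℕ) * w ^ (t.2.2.2 : ℕ),
      ⟨_, _, _, _, rfl⟩⟩ with hf
  have hfsurj : Function.Surjective f := by
    rintro ⟨g, a, b, c, d, rfl⟩
    refine ⟨(⟨a % p, Nat.mod_lt _ hp⟩, ⟨b % p, Nat.mod_lt _ hp⟩,
      ⟨c % p, Nat.mod_lt _ hp⟩, ⟨d % p, Nat.mod_lt _ hp⟩), ?_⟩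
    simp only [hf]
    ext
    simp only
    rw [← pow_mod_eq hx, ← pow_mod_eq hy, ← pow_mod_eq hz, ← pow_mod_eq hw]
  calc Nat.card T ≤ Nat.card (Fin p × Fin p × Fin p × Fin p) :=
      Nat.card_le_card_of_surjective f hfsurj
    _ = p ^ 4 := by simp [Nat.card_prod]; ring

end AuxHelpers

/-- The relations of the group `H₂ = K × C_p` on four generators. -/
private def h2Rels (p : ℕ) : Set (FreeGroup (Fin 4)) :=
  {(FreeGroup.of 0) ^ p ^ 2, (FreeGroup.of 1) ^ p, (FreeGroup.of 2) ^ p, (FreeGroup.of 3) ^ p,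
    pcomm (FreeGroup.of 1) (FreeGroup.of 0) * (FreeGroup.of 2)⁻¹,
    pcomm (FreeGroup.of 1) (FreeGroup.of 2), pcomm (FreeGroup.of 0) (FreeGroup.of 2),
    pcomm (FreeGroup.of 3) (FreeGroup.of 0), pcomm (FreeGroup.of 3) (FreeGroup.of 1),
    pcomm (FreeGroup.of 3) (FreeGroup.of 2)}

private lemma h2Rels_check {G : Type*} [Group G] {p : ℕ} (f : Fin 4 → G)
    (h0 : f 0 ^ p ^ 2 = 1) (h1 : f 1 ^ p = 1) (h2 : f 2 ^ p = 1) (h3 : f 3 ^ p = 1)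
    (c1 : pcomm (f 1) (f 0) = f 2) (c2 : pcomm (f 1) (f 2) = 1) (c3 : pcomm (f 0) (f 2) = 1)
    (c4 : pcomm (f 3) (f 0) = 1) (c5 : pcomm (f 3) (f 1) = 1) (c6 : pcomm (f 3) (f 2) = 1) :
    ∀ r ∈ h2Rels p, FreeGroup.lift f r = 1 := by
  intro r hr
  simp only [h2Rels, Set.mem_insert_iff, Set.mem_singleton_iff] at hr
  rcases hr with rfl | rfl | rfl | rfl | rfl | rfl | rfl | rfl | rfl | rfl
  · rw [map_pow, FreeGroup.lift_apply_of, h0]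
  · rw [map_pow, FreeGroup.lift_apply_of, h1]
  · rw [map_pow, FreeGroup.lift_apply_of, h2]
  · rw [map_pow, FreeGroup.lift_apply_of, h3]
  · rw [map_mul, map_inv, map_pcomm, FreeGroup.lift_apply_of, FreeGroup.lift_apply_of,
      FreeGroup.lift_apply_of, c1, mul_inv_cancel]
  · rw [map_pcomm, FreeGroup.lift_apply_of, FreeGroup.lift_apply_of, c2]
  · rw [map_pcomm, FreeGroup.lift_apply_of, FreeGroup.lift_apply_of, c3]
  · rw [map_pcomm, FreeGroup.lift_apply_of, FreeGroup.lift_apply_of, c4]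
  · rw [map_pcomm, FreeGroup.lift_apply_of, FreeGroup.lift_apply_of, c5]
  · rw [map_pcomm, FreeGroup.lift_apply_of, FreeGroup.lift_apply_of, c6]

private lemma h2Rels_mk_one {p : ℕ} : ∀ r ∈ h2Rels p,
    PresentedGroup.mk (h2Rels p) r = 1 := fun r hr =>
  (QuotientGroup.eq_one_iff r).mpr (Subgroup.subset_normalClosure hr)

/-- There is a surjective homomorphism `π : W₂ → H₂` sending `α, α₁, α₂` to the generators
of `K`, `α₃` to the generator of the `C_p` factor, and `x, y, z, w` to `1`, whose kernel `K`
has order `p⁴`, is central, and is contained in the commutator subgroup of `W₂`. -/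
theorem stmt_4 (p : ℕ) (hp : p.Prime) (hodd : Odd p)
    (W : Type) [Group W] (α a₁ a₂ a₃ x y z w : W)
    (hW : IsW2 p W α a₁ a₂ a₃ x y z w)
    (H : Type) [Group H] (α' a₁' a₂' b : H)
    (hH : IsH2 p H α' a₁' a₂' b) :
    ∃ π : W →* H, Function.Surjective π ∧
      π α = α' ∧ π a₁ = a₁' ∧ π a₂ = a₂' ∧ π a₃ = b ∧
      π x = 1 ∧ π y = 1 ∧ π z = 1 ∧ π w = 1 ∧
      Nat.card π.ker = p ^ 4 ∧
      π.ker ≤ Subgroup.center W ∧ π.ker ≤ commutator W := by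
  obtain ⟨hWgen, hWcard, r1, r2, r3, r4, r5, r6, hαp, h1p, h2p, h3p, hxp, hyp, hzp, hwp, hcomm⟩ := hW
  obtain ⟨hHgen, hHcard, s1, s2, s3, sαp, s1p, s2p, sbp, hbcomm⟩ := hH
  have hp0 : 0 < p := hp.pos
  have hWfin : Finite W := Nat.finite_of_card_ne_zero (by rw [hWcard]; positivity)
  -- x, y, z, w are central
  have hcent : ∀ c ∈ ({x, y, z, w} : Set W), c ∈ Subgroup.center W := by
    intro c hc
    rw [Subgroup.mem_center_iff]
    intro g
    have hle : Subgroup.closure {α, a₁, a₂, a₃, x, y, z, w} ≤ Subgroup.centralizer {c} := by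
      rw [Subgroup.closure_le]
      intro h hh
      rw [SetLike.mem_coe, Subgroup.mem_centralizer_iff]
      intro c'' hc''
      obtain rfl : c'' = c := hc''
      exact hcomm _ hc h hh
    have hg : g ∈ Subgroup.centralizer {c} := hle (hWgen ▸ Subgroup.mem_top g)
    exact (Subgroup.mem_centralizer_iff.mp hg c rfl).symm
  set N : Subgroup W := Subgroup.closure {x, y, z, w} with hN
  have hNcenter : N ≤ Subgroup.center W := (Subgroup.closure_le _).mpr hcent
  haveI hNnormal : N.Normal := by
    constructor
    intro n hn g
    have hcn := Subgroup.mem_center_iff.mp (hNcenter hn) g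
    have : g * n * g⁻¹ = n := by rw [hcn]; group
    rwa [this]
  have hNcard_le : Nat.card N ≤ p ^ 4 := by
    have m1 : x ∈ ({x, y, z, w} : Set W) := by simp
    have m2 : y ∈ ({x, y, z, w} : Set W) := by simp
    have m3 : z ∈ ({x, y, z, w} : Set W) := by simp
    have m4 : w ∈ ({x, y, z, w} : Set W) := by simp
    have gm : ∀ c ∈ ({x, y, z, w} : Set W), c ∈ ({α, a₁, a₂, a₃, x, y, z, w} : Set W) := by
      intro c hc; simp at hc ⊢; tauto
    exact abelian4 hp0 (hcomm x m1 y (gm y m2)) (hcomm x m1 z (gm z m3))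
      (hcomm x m1 w (gm w m4)) (hcomm y m2 z (gm z m3)) (hcomm y m2 w (gm w m4))
      (hcomm z m3 w (gm w m4)) hxp hyp hzp hwp
  -- the quotient
  set mk : W →* W ⧸ N := QuotientGroup.mk' N with hmk
  have hmksurj : Function.Surjective mk := QuotientGroup.mk'_surjective N
  have hmk1 : ∀ c ∈ ({x, y, z, w} : Set W), mk c = 1 := by
    intro c hc
    rw [hmk, QuotientGroup.mk'_apply, QuotientGroup.eq_one_iff]
    exact Subgroup.subset_closure hc
  have hBA : mk a₁ * mk α = mk α * (mk a₁ * mk a₂) := by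
    have := mul_eq_of_pcomm r1
    simpa [map_mul] using congrArg mk this
  have hCA : Commute (mk a₂) (mk α) := by
    refine (commute_of_pcomm ?_).symm
    rw [← map_pcomm, r3]; exact hmk1 y (by simp)
  have hCB : Commute (mk a₂) (mk a₁) := by
    refine (commute_of_pcomm ?_).symm
    rw [← map_pcomm, r2]; exact hmk1 x (by simp)
  have hCD : Commute (mk a₂) (mk a₃) := by
    refine (commute_of_pcomm ?_).symm
    rw [← map_pcomm, r6, map_one]
  have hDA : Commute (mk a₃) (mk α) := by
    refine commute_of_pcomm ?_
    rw [← map_pcomm, r5]; exact hmk1 w (by simp)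
  have hDB : Commute (mk a₃) (mk a₁) := by
    refine commute_of_pcomm ?_
    rw [← map_pcomm, r4]; exact hmk1 z (by simp)
  have hA' : (mk α) ^ p ^ 2 = 1 := by rw [← map_pow, hαp, map_one]
  have hB' : (mk a₁) ^ p = 1 := by rw [← map_pow, h1p, map_one]
  have hC' : (mk a₂) ^ p = 1 := by rw [← map_pow, h2p, map_one]
  have hD' : (mk a₃) ^ p = 1 := by rw [← map_pow, h3p, map_one]
  have hgenQ : Subgroup.closure {mk α, mk a₁, mk a₂, mk a₃} = ⊤ := by
    apply le_antisymm le_top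
    have hmt : (⊤ : Subgroup (W ⧸ N)) = Subgroup.map mk ⊤ :=
      (Subgroup.map_top_of_surjective mk hmksurj).symm
    rw [hmt, ← hWgen, MonoidHom.map_closure, Subgroup.closure_le]
    rintro g ⟨h', hh, rfl⟩
    rcases hh with hh | hh | hh | hh | hh | hh | hh | hh
    · rw [hh]; exact Subgroup.subset_closure (by simp)
    · rw [hh]; exact Subgroup.subset_closure (by simp)
    · rw [hh]; exact Subgroup.subset_closure (by simp)
    · rw [hh]; exact Subgroup.subset_closure (by simp)
    · rw [hh, hmk1 x (by simp)]; exact Subgroup.one_mem _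
    · rw [hh, hmk1 y (by simp)]; exact Subgroup.one_mem _
    · rw [hh, hmk1 z (by simp)]; exact Subgroup.one_mem _
    · rw [hh, hmk1 w (by simp)]; exact Subgroup.one_mem _
  obtain ⟨hQfin, hQcard_le⟩ := collect4 hp0 hgenQ hBA hCA hCB hCD hDA hDB hA' hB' hC' hD'
  -- cardinalities
  have heq : Nat.card W = Nat.card (W ⧸ N) * Nat.card N :=
    Subgroup.card_eq_card_quotient_mul_card_subgroup N
  have h9 : Nat.card (W ⧸ N) * Nat.card N = p ^ 9 := by rw [← heq, hWcard]
  have hNge : p ^ 4 ≤ Nat.card N := by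
    have hstep : p ^ 5 * p ^ 4 ≤ p ^ 5 * Nat.card N := by
      calc p ^ 5 * p ^ 4 = p ^ 9 := by ring
        _ = Nat.card (W ⧸ N) * Nat.card N := h9.symm
        _ ≤ p ^ 5 * Nat.card N := Nat.mul_le_mul_right _ hQcard_le
    exact Nat.le_of_mul_le_mul_left hstep (by positivity)
  have hNcard : Nat.card N = p ^ 4 := le_antisymm hNcard_le hNge
  have hQcard : Nat.card (W ⧸ N) = p ^ 5 := by
    have h9' : Nat.card (W ⧸ N) * p ^ 4 = p ^ 5 * p ^ 4 := by
      rw [← hNcard, h9]; rw [hNcard]; ring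
    exact Nat.eq_of_mul_eq_mul_right (by positivity) h9'
  -- the presented group
  set G5 := PresentedGroup (h2Rels p) with hG5
  have relone := @h2Rels_mk_one p
  set gA : G5 := PresentedGroup.of 0 with hgA
  set gB : G5 := PresentedGroup.of 1 with hgB
  set gC : G5 := PresentedGroup.of 2 with hgC
  set gD : G5 := PresentedGroup.of 3 with hgD
  have g0 : gA ^ p ^ 2 = 1 := by
    have := relone _ (show (FreeGroup.of 0 : FreeGroup (Fin 4)) ^ p ^ 2 ∈ h2Rels p by
      simp [h2Rels])
    rwa [map_pow] at this
  have g1 : gB ^ p = 1 := by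
    have := relone _ (show (FreeGroup.of 1 : FreeGroup (Fin 4)) ^ p ∈ h2Rels p by
      simp [h2Rels])
    rwa [map_pow] at this
  have g2 : gC ^ p = 1 := by
    have := relone _ (show (FreeGroup.of 2 : FreeGroup (Fin 4)) ^ p ∈ h2Rels p by
      simp [h2Rels])
    rwa [map_pow] at this
  have g3 : gD ^ p = 1 := by
    have := relone _ (show (FreeGroup.of 3 : FreeGroup (Fin 4)) ^ p ∈ h2Rels p by
      simp [h2Rels])
    rwa [map_pow] at this
  have gc1 : pcomm gB gA = gC := by
    have := relone _ (show pcomm (FreeGroup.of 1) (FreeGroup.of 0) * (FreeGroup.of 2)⁻¹ ∈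
      h2Rels p by simp [h2Rels])
    rw [map_mul, map_inv, map_pcomm] at this
    exact mul_inv_eq_one.mp this
  have gc2 : pcomm gB gC = 1 := by
    have := relone _ (show pcomm (FreeGroup.of 1) (FreeGroup.of 2) ∈ h2Rels p by simp [h2Rels])
    rwa [map_pcomm] at this
  have gc3 : pcomm gA gC = 1 := by
    have := relone _ (show pcomm (FreeGroup.of 0) (FreeGroup.of 2) ∈ h2Rels p by simp [h2Rels])
    rwa [map_pcomm] at this
  have gc4 : pcomm gD gA = 1 := by
    have := relone _ (show pcomm (FreeGroup.of 3) (FreeGroup.of 0) ∈ h2Rels p by simp [h2Rels])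
    rwa [map_pcomm] at this
  have gc5 : pcomm gD gB = 1 := by
    have := relone _ (show pcomm (FreeGroup.of 3) (FreeGroup.of 1) ∈ h2Rels p by simp [h2Rels])
    rwa [map_pcomm] at this
  have gc6 : pcomm gD gC = 1 := by
    have := relone _ (show pcomm (FreeGroup.of 3) (FreeGroup.of 2) ∈ h2Rels p by simp [h2Rels])
    rwa [map_pcomm] at this
  have hgen5 : Subgroup.closure {gA, gB, gC, gD} = ⊤ := by
    apply le_antisymm le_top
    rw [← PresentedGroup.closure_range_of (h2Rels p), Subgroup.closure_le]
    rintro g ⟨i, rfl⟩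
    fin_cases i <;> apply Subgroup.subset_closure <;> simp [hgA, hgB, hgC, hgD]
  obtain ⟨hG5fin, hG5card_le⟩ := collect4 hp0 hgen5 (mul_eq_of_pcomm gc1)
    (commute_of_pcomm gc3).symm (commute_of_pcomm gc2).symm (commute_of_pcomm gc6).symm
    (commute_of_pcomm gc4) (commute_of_pcomm gc5) g0 g1 g2 g3
  haveI := hG5fin
  -- the map G5 → W ⧸ N
  set fW : Fin 4 → W ⧸ N := ![mk α, mk a₁, mk a₂, mk a₃] with hfW
  have hfW0 : fW 0 = mk α := rfl
  have hfW1 : fW 1 = mk a₁ := rfl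
  have hfW2 : fW 2 = mk a₂ := rfl
  have hfW3 : fW 3 = mk a₃ := rfl
  have hcheckW : ∀ r ∈ h2Rels p, FreeGroup.lift fW r = 1 := by
    apply h2Rels_check fW
    · rw [hfW0]; exact hA'
    · rw [hfW1]; exact hB'
    · rw [hfW2]; exact hC'
    · rw [hfW3]; exact hD'
    · rw [hfW1, hfW0, hfW2, ← map_pcomm, r1]
    · rw [hfW1, hfW2, ← map_pcomm, r2]; exact hmk1 x (by simp)
    · rw [hfW0, hfW2, ← map_pcomm, r3]; exact hmk1 y (by simp)
    · rw [hfW3, hfW0, ← map_pcomm, r5]; exact hmk1 w (by simp)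
    · rw [hfW3, hfW1, ← map_pcomm, r4]; exact hmk1 z (by simp)
    · rw [hfW3, hfW2, ← map_pcomm, r6, map_one]
  set φ : G5 →* W ⧸ N := PresentedGroup.toGroup hcheckW with hφ
  have hφof : ∀ i, φ (PresentedGroup.of i) = fW i := fun i => PresentedGroup.toGroup.of hcheckW
  have hφsurj : Function.Surjective φ := by
    rw [← MonoidHom.range_eq_top]
    apply le_antisymm le_top
    rw [← hgenQ, Subgroup.closure_le]
    rintro g (hh | hh | hh | hh) <;> rw [hh]
    · exact ⟨PresentedGroup.of 0, (hφof 0).trans hfW0⟩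
    · exact ⟨PresentedGroup.of 1, (hφof 1).trans hfW1⟩
    · exact ⟨PresentedGroup.of 2, (hφof 2).trans hfW2⟩
    · exact ⟨PresentedGroup.of 3, (hφof 3).trans hfW3⟩
  have hQle5 : Nat.card (W ⧸ N) ≤ Nat.card G5 := Nat.card_le_card_of_surjective φ hφsurj
  have hG5card : Nat.card G5 = p ^ 5 := le_antisymm hG5card_le (hQcard ▸ hQle5)
  have hφbij : Function.Bijective φ :=
    (Nat.bijective_iff_surjective_and_card φ).mpr ⟨hφsurj, by rw [hG5card, hQcard]⟩
  set e : G5 ≃* W ⧸ N := MulEquiv.ofBijective φ hφbij with he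
  have hesymm : ∀ i, e.symm (fW i) = PresentedGroup.of i := by
    intro i
    rw [MulEquiv.symm_apply_eq]
    exact (hφof i).symm
  -- the map G5 → H
  set fH : Fin 4 → H := ![α', a₁', a₂', b] with hfH
  have hfH0 : fH 0 = α' := rfl
  have hfH1 : fH 1 = a₁' := rfl
  have hfH2 : fH 2 = a₂' := rfl
  have hfH3 : fH 3 = b := rfl
  have hcheckH : ∀ r ∈ h2Rels p, FreeGroup.lift fH r = 1 := by
    apply h2Rels_check fH
    · rw [hfH0]; exact sαp
    · rw [hfH1]; exact s1p
    · rw [hfH2]; exact s2p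
    · rw [hfH3]; exact sbp
    · rw [hfH1, hfH0, hfH2]; exact s1
    · rw [hfH1, hfH2]; exact s2
    · rw [hfH0, hfH2]; exact s3
    · rw [hfH3, hfH0]; exact pcomm_eq_one_of_commute (hbcomm α' (by simp))
    · rw [hfH3, hfH1]; exact pcomm_eq_one_of_commute (hbcomm a₁' (by simp))
    · rw [hfH3, hfH2]; exact pcomm_eq_one_of_commute (hbcomm a₂' (by simp))
  set ψ : G5 →* H := PresentedGroup.toGroup hcheckH with hψ
  have hψof : ∀ i, ψ (PresentedGroup.of i) = fH i := fun i => PresentedGroup.toGroup.of hcheckH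
  have hψsurj : Function.Surjective ψ := by
    rw [← MonoidHom.range_eq_top]
    apply le_antisymm le_top
    rw [← hHgen, Subgroup.closure_le]
    rintro g (hh | hh | hh | hh) <;> rw [hh]
    · exact ⟨PresentedGroup.of 0, (hψof 0).trans hfH0⟩
    · exact ⟨PresentedGroup.of 1, (hψof 1).trans hfH1⟩
    · exact ⟨PresentedGroup.of 2, (hψof 2).trans hfH2⟩
    · exact ⟨PresentedGroup.of 3, (hψof 3).trans hfH3⟩
  have hψbij : Function.Bijective ψ :=
    (Nat.bijective_iff_surjective_and_card ψ).mpr ⟨hψsurj, by rw [hG5card, hHcard]⟩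
  -- the homomorphism π
  set π : W →* H := ψ.comp ((e.symm : (W ⧸ N) ≃* G5).toMonoidHom.comp mk) with hπdef
  have hπapp : ∀ g : W, π g = ψ (e.symm (mk g)) := fun g => rfl
  have hπgen : ∀ (g : W) (i : Fin 4), mk g = fW i → π g = fH i := by
    intro g i hg
    rw [hπapp, hg, hesymm i, hψof i]
  have hπ1 : ∀ c ∈ ({x, y, z, w} : Set W), π c = 1 := by
    intro c hc
    rw [hπapp, hmk1 c hc, map_one, map_one]
  have hπsurj : Function.Surjective π :=
    hψsurj.comp ((e.symm.surjective).comp hmksurj)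
  have hker : π.ker = N := by
    ext g
    simp only [MonoidHom.mem_ker]
    constructor
    · intro hg
      have hg1 : ψ (e.symm (mk g)) = 1 := hg
      have h2 : e.symm (mk g) = 1 := hψbij.injective (by rw [hg1, map_one])
      have h3 : mk g = 1 := by
        have h4 := congrArg e h2
        rwa [MulEquiv.apply_symm_apply, map_one] at h4
      rwa [hmk, QuotientGroup.mk'_apply, QuotientGroup.eq_one_iff] at h3
    · intro hg
      have h3 : mk g = 1 := by
        rw [hmk, QuotientGroup.mk'_apply, QuotientGroup.eq_one_iff]; exact hg
      rw [hπapp, h3, map_one, map_one]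
  have hNcomm : N ≤ commutator W := by
    rw [hN, Subgroup.closure_le]
    rintro c (hh | hh | hh | hh) <;> rw [hh]
    · rw [← r2]; exact pcomm_mem_commutator a₁ a₂
    · rw [← r3]; exact pcomm_mem_commutator α a₂
    · rw [← r4]; exact pcomm_mem_commutator a₃ a₁
    · rw [← r5]; exact pcomm_mem_commutator a₃ α
  refine ⟨π, hπsurj, hπgen α 0 rfl, hπgen a₁ 1 rfl, hπgen a₂ 2 rfl, hπgen a₃ 3 rfl,
    hπ1 x (by simp), hπ1 y (by simp), hπ1 z (by simp), hπ1 w (by simp), ?_, ?_, ?_⟩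
  · rw [hker]; exact hNcard
  · rw [hker]; exact hNcenter
  · rw [hker]; exact hNcomm
end

section
/- The commutator subgroup of W₂ equals the subgroup generated by {x, y, z, w, α₂}, and the center of W₂ equals the subgroup generated by {α^p, x, y, z, w}. -/
private lemma hpoint {G : Type*} [Group G] {u v a : G} (h : u * v = v * a) (g : G) :
    u * (v * g) = v * (a * g) := by rw [← mul_assoc, h, mul_assoc]

private lemma commute_all {G : Type*} [Group G] {S : Set G}
    (htop : Subgroup.closure S = ⊤) {c : G} (hc : ∀ s ∈ S, Commute c s) :
    ∀ g : G, Commute c g := by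
  intro g
  have hg : g ∈ Subgroup.closure S := htop ▸ Subgroup.mem_top g
  induction hg using Subgroup.closure_induction with
  | mem s hs => exact hc s hs
  | one => exact Commute.one_right c
  | mul a b _ _ ha hb => exact ha.mul_right hb
  | inv a _ ha => exact ha.inv_right

private lemma pow_reduce {G : Type*} [Monoid G] {u : G} {q : ℕ} (hu : u ^ q = 1) (i : ℕ) :
    u ^ i = u ^ (i % q) := by
  conv_lhs => rw [← Nat.div_add_mod i q]
  rw [pow_add, pow_mul, hu, one_pow, one_mul]

private lemma inv_pow_eq_s11 {G : Type*} [Group G] {u : G} {q : ℕ} (hu : u ^ q = 1)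
    (hq : 1 ≤ q) (e : ℕ) : (u ^ e)⁻¹ = u ^ ((q - 1) * e) := by
  symm
  apply eq_inv_of_mul_eq_one_left
  rw [← pow_add]
  have : (q - 1) * e + e = q * e := by
    have : q - 1 + 1 = q := Nat.succ_pred_eq_of_pos hq
    calc (q - 1) * e + e = (q - 1 + 1) * e := by rw [Nat.succ_mul]
    _ = q * e := by rw [this]
  rw [this, pow_mul, hu, one_pow]

private lemma closed_pow {G : Type*} [Group G] {T : Set G} {u : G}
    (h : ∀ g ∈ T, g * u ∈ T) : ∀ g ∈ T, ∀ e : ℕ, g * u ^ e ∈ T := by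
  intro g hg e
  induction e with
  | zero => simpa using hg
  | succ e ih => rw [pow_succ, ← mul_assoc]; exact h _ ih
/-- slide a single `c` across `u ^ n`. -/
private lemma slide2 {G : Type*} [Group G] {u c d : G} (h2 : c * u = u * (c * d))
    (hdu : Commute d u) : ∀ n : ℕ, c * u ^ n = u ^ n * (c * d ^ n)
  | 0 => by simp
  | (n+1) => by
    calc c * u ^ (n+1) = (c * u ^ n) * u := by rw [pow_succ, ← mul_assoc]
    _ = (u ^ n * (c * d ^ n)) * u := by rw [slide2 h2 hdu n]
    _ = u ^ n * (c * (d ^ n * u)) := by simp only [mul_assoc]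
    _ = u ^ n * (c * (u * d ^ n)) := by rw [(hdu.pow_left n).eq]
    _ = u ^ n * ((c * u) * d ^ n) := by simp only [mul_assoc]
    _ = u ^ n * ((u * (c * d)) * d ^ n) := by rw [h2]
    _ = (u ^ n * u) * (c * (d * d ^ n)) := by simp only [mul_assoc]
    _ = u ^ (n+1) * (c * d ^ (n+1)) := by rw [← pow_succ, ← pow_succ']

/-- slide `u ^ n` across a single `v` (simple case). -/
private lemma slide1 {G : Type*} [Group G] {u v c : G} (h : u * v = v * (u * c))
    (hcu : Commute c u) : ∀ n : ℕ, u ^ n * v = v * (u ^ n * c ^ n)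
  | 0 => by simp
  | (n+1) => by
    calc u ^ (n+1) * v = u * (u ^ n * v) := by rw [pow_succ', mul_assoc]
    _ = u * (v * (u ^ n * c ^ n)) := by rw [slide1 h hcu n]
    _ = (u * v) * (u ^ n * c ^ n) := by simp only [mul_assoc]
    _ = (v * (u * c)) * (u ^ n * c ^ n) := by rw [h]
    _ = v * (u * ((c * u ^ n) * c ^ n)) := by simp only [mul_assoc]
    _ = v * (u * ((u ^ n * c) * c ^ n)) := by rw [(hcu.pow_right n).eq]
    _ = v * ((u * u ^ n) * (c * c ^ n)) := by simp only [mul_assoc]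
    _ = v * (u ^ (n+1) * c ^ (n+1)) := by rw [← pow_succ', ← pow_succ']

/-- slide `u ^ n` across `v`, Heisenberg case. -/
private lemma slideA {G : Type*} [Group G] {u v c d : G} (h : u * v = v * (u * c))
    (h2 : c * u = u * (c * d)) (hdu : Commute d u) (hdc : Commute d c) :
    ∀ n : ℕ, u ^ n * v = v * (u ^ n * (c ^ n * d ^ (n.choose 2)))
  | 0 => by simp
  | (n+1) => by
    rw [Nat.choose_succ_succ, Nat.choose_one_right]
    calc u ^ (n+1) * v = u * (u ^ n * v) := by rw [pow_succ', mul_assoc]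
    _ = u * (v * (u ^ n * (c ^ n * d ^ (n.choose 2)))) := by rw [slideA h h2 hdu hdc n]
    _ = (u * v) * (u ^ n * (c ^ n * d ^ (n.choose 2))) := by simp only [mul_assoc]
    _ = (v * (u * c)) * (u ^ n * (c ^ n * d ^ (n.choose 2))) := by rw [h]
    _ = v * (u * ((c * u ^ n) * (c ^ n * d ^ (n.choose 2)))) := by simp only [mul_assoc]
    _ = v * (u * ((u ^ n * (c * d ^ n)) * (c ^ n * d ^ (n.choose 2)))) := by
        rw [slide2 h2 hdu n]
    _ = v * ((u * u ^ n) * (c * ((d ^ n * c ^ n) * d ^ (n.choose 2)))) := by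
        simp only [mul_assoc]
    _ = v * ((u * u ^ n) * (c * ((c ^ n * d ^ n) * d ^ (n.choose 2)))) := by
        rw [(hdc.pow_pow n n).eq]
    _ = v * ((u * u ^ n) * ((c * c ^ n) * (d ^ n * d ^ (n.choose 2)))) := by
        simp only [mul_assoc]
    _ = v * (u ^ (n+1) * (c ^ (n+1) * d ^ (n + n.choose 2))) := by
        rw [← pow_succ', ← pow_succ', ← pow_add]

/-- slide a single `u` across `v ^ n`, Heisenberg case. -/
private lemma slideB {G : Type*} [Group G] {u v c d : G} (h : u * v = v * (u * c))
    (h2 : c * v = v * (c * d)) (hdv : Commute d v) (hdc : Commute d c) :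
    ∀ n : ℕ, u * v ^ n = v ^ n * (u * (c ^ n * d ^ (n.choose 2)))
  | 0 => by simp
  | (n+1) => by
    rw [Nat.choose_succ_succ, Nat.choose_one_right]
    calc u * v ^ (n+1) = (u * v ^ n) * v := by rw [pow_succ, ← mul_assoc]
    _ = (v ^ n * (u * (c ^ n * d ^ (n.choose 2)))) * v := by rw [slideB h h2 hdv hdc n]
    _ = v ^ n * (u * (c ^ n * (d ^ (n.choose 2) * v))) := by simp only [mul_assoc]
    _ = v ^ n * (u * (c ^ n * (v * d ^ (n.choose 2)))) := by
        rw [(hdv.pow_left (n.choose 2)).eq]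
    _ = v ^ n * (u * ((c ^ n * v) * d ^ (n.choose 2))) := by simp only [mul_assoc]
    _ = v ^ n * (u * ((v * (c ^ n * d ^ n)) * d ^ (n.choose 2))) := by
        rw [slide1 h2 hdc n]
    _ = v ^ n * ((u * v) * (c ^ n * (d ^ n * d ^ (n.choose 2)))) := by
        simp only [mul_assoc]
    _ = v ^ n * ((v * (u * c)) * (c ^ n * (d ^ n * d ^ (n.choose 2)))) := by rw [h]
    _ = (v ^ n * v) * (u * ((c * c ^ n) * (d ^ n * d ^ (n.choose 2)))) := by
        simp only [mul_assoc]
    _ = v ^ (n+1) * (u * (c ^ (n+1) * d ^ (n + n.choose 2))) := by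
        rw [← pow_succ, ← pow_succ', ← pow_add]

private def FW {G : Type*} [Group G] (α a₁ a₂ a₃ x y z w : G) (i j k l m n r s : ℕ) : G :=
  α ^ i * (a₁ ^ j * (a₂ ^ k * (a₃ ^ l * (x ^ m * (y ^ n * (z ^ r * w ^ s))))))

section Lmul

variable {G : Type*} [Group G] {p : ℕ} {α a₁ a₂ a₃ x y z w : G}
variable (hx : ∀ g : G, Commute x g) (hy : ∀ g : G, Commute y g)
variable (hz : ∀ g : G, Commute z g) (hw : ∀ g : G, Commute w g)
variable (r1 : a₁ * α = α * (a₁ * a₂)) (r2 : a₂ * a₁ = a₁ * (a₂ * x ^ (p-1)))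
variable (r3 : a₂ * α = α * (a₂ * y ^ (p-1))) (r4 : a₃ * a₁ = a₁ * (a₃ * z))
variable (r5 : a₃ * α = α * (a₃ * w)) (r6 : a₃ * a₂ = a₂ * a₃)

include hx hy hz hw r1 r2 r3 r4 r5 r6 in
private lemma Lα : ∀ i j k l m n r s : ℕ,
    FW α a₁ a₂ a₃ x y z w i j k l m n r s * α
      = FW α a₁ a₂ a₃ x y z w (i+1) j (j+k) l ((p-1) * j.choose 2 + m) ((p-1)*k + n) r (l + s) := by
  intro i j k l m n r s
  simp only [FW, mul_assoc]
  rw [((hw α).pow_left s).eq]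
  rw [hpoint ((hz α).pow_left r).eq]
  rw [hpoint ((hy α).pow_left n).eq]
  rw [hpoint ((hx α).pow_left m).eq]
  rw [hpoint (slide1 r5 (hw a₃) l)]
  simp only [mul_assoc]
  rw [hpoint (slide1 r3 ((hy a₂).pow_left (p-1)) k)]
  simp only [mul_assoc]
  rw [hpoint (slideA r1 r2 ((hx a₁).pow_left (p-1)) ((hx a₂).pow_left (p-1)) j)]
  simp only [mul_assoc]
  rw [← mul_assoc (α^i) α, ← pow_succ]
  simp only [← pow_mul]
  -- order now: α^(i+1), a₁^j, a₂^j, x^M, a₂^k, y^N, a₃^l, w^l, x^m, y^n, z^r, w^s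
  rw [hpoint ((hx (a₂^k)).pow_left ((p-1) * j.choose 2)).eq]
  rw [← mul_assoc (a₂^j) (a₂^k), ← pow_add]
  -- α^(i+1), a₁^j, a₂^(j+k), x^M, y^N, a₃^l, w^l, x^m, y^n, z^r, w^s
  rw [hpoint ((hy (a₃^l)).pow_left ((p-1)*k)).eq]
  rw [hpoint ((hx (a₃^l)).pow_left ((p-1) * j.choose 2)).eq]
  -- α^(i+1), a₁^j, a₂^(j+k), a₃^l, x^M, y^N, w^l, x^m, ...
  rw [hpoint ((hw (x^m)).pow_left l).eq]
  rw [hpoint ((hw (y^n)).pow_left l).eq]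
  rw [hpoint ((hw (z^r)).pow_left l).eq]
  rw [← pow_add w l s]
  rw [hpoint (((hy (x^m)).pow_left ((p-1)*k)).eq)]
  rw [← mul_assoc (x ^ ((p-1) * j.choose 2)) (x^m), ← pow_add]
  rw [← mul_assoc (y ^ ((p-1) * k)) (y^n), ← pow_add]

end Lmul

section More
variable {G : Type*} [Group G] {p : ℕ} {α a₁ a₂ a₃ x y z w : G}
variable (hx : ∀ g : G, Commute x g) (hy : ∀ g : G, Commute y g)
variable (hz : ∀ g : G, Commute z g) (hw : ∀ g : G, Commute w g)
variable (r2 : a₂ * a₁ = a₁ * (a₂ * x ^ (p-1))) (r4 : a₃ * a₁ = a₁ * (a₃ * z))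
variable (r6 : a₃ * a₂ = a₂ * a₃)

set_option linter.unusedSectionVars false

include hx hy hz hw r2 r4 in
private lemma La1 : ∀ i j k l m n r s : ℕ,
    FW α a₁ a₂ a₃ x y z w i j k l m n r s * a₁
      = FW α a₁ a₂ a₃ x y z w i (j+1) k l ((p-1)*k + m) n (l + r) s := by
  intro i j k l m n r s
  simp only [FW, mul_assoc]
  rw [((hw a₁).pow_left s).eq]
  rw [hpoint ((hz a₁).pow_left r).eq]
  rw [hpoint ((hy a₁).pow_left n).eq]
  rw [hpoint ((hx a₁).pow_left m).eq]
  rw [hpoint (slide1 r4 (hz a₃) l)]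
  simp only [mul_assoc]
  rw [hpoint (slide1 r2 ((hx a₂).pow_left (p-1)) k)]
  simp only [mul_assoc]
  rw [← mul_assoc (a₁^j) a₁, ← pow_succ]
  simp only [← pow_mul]
  -- α^i, a₁^(j+1), a₂^k, x^K, a₃^l, z^l, x^m, y^n, z^r, w^s
  rw [hpoint ((hx (a₃^l)).pow_left ((p-1)*k)).eq]
  rw [hpoint ((hz (x^m)).pow_left l).eq]
  rw [← mul_assoc (x ^ ((p-1)*k)) (x^m), ← pow_add]
  rw [hpoint ((hz (y^n)).pow_left l).eq]
  rw [← mul_assoc (z^l) (z^r), ← pow_add]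

include hx hy hz hw r6 in
private lemma La2 : ∀ i j k l m n r s : ℕ,
    FW α a₁ a₂ a₃ x y z w i j k l m n r s * a₂
      = FW α a₁ a₂ a₃ x y z w i j (k+1) l m n r s := by
  intro i j k l m n r s
  simp only [FW, mul_assoc]
  rw [((hw a₂).pow_left s).eq]
  rw [hpoint ((hz a₂).pow_left r).eq]
  rw [hpoint ((hy a₂).pow_left n).eq]
  rw [hpoint ((hx a₂).pow_left m).eq]
  rw [hpoint (((show Commute a₃ a₂ from r6).pow_left l).eq)]
  rw [← mul_assoc (a₂^k) a₂, ← pow_succ]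

include hx hy hz hw in
private lemma La3 : ∀ i j k l m n r s : ℕ,
    FW α a₁ a₂ a₃ x y z w i j k l m n r s * a₃
      = FW α a₁ a₂ a₃ x y z w i j k (l+1) m n r s := by
  intro i j k l m n r s
  simp only [FW, mul_assoc]
  rw [((hw a₃).pow_left s).eq]
  rw [hpoint ((hz a₃).pow_left r).eq]
  rw [hpoint ((hy a₃).pow_left n).eq]
  rw [hpoint ((hx a₃).pow_left m).eq]
  rw [← mul_assoc (a₃^l) a₃, ← pow_succ]

include hx hy hz hw in
private lemma Lx : ∀ i j k l m n r s : ℕ,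
    FW α a₁ a₂ a₃ x y z w i j k l m n r s * x
      = FW α a₁ a₂ a₃ x y z w i j k l (m+1) n r s := by
  intro i j k l m n r s
  simp only [FW, mul_assoc]
  rw [((hw x).pow_left s).eq]
  rw [hpoint ((hz x).pow_left r).eq]
  rw [hpoint ((hy x).pow_left n).eq]
  rw [← mul_assoc (x^m) x, ← pow_succ]

include hx hy hz hw in
private lemma Ly : ∀ i j k l m n r s : ℕ,
    FW α a₁ a₂ a₃ x y z w i j k l m n r s * y
      = FW α a₁ a₂ a₃ x y z w i j k l m (n+1) r s := by
  intro i j k l m n r s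
  simp only [FW, mul_assoc]
  rw [((hw y).pow_left s).eq]
  rw [hpoint ((hz y).pow_left r).eq]
  rw [← mul_assoc (y^n) y, ← pow_succ]

include hw in
private lemma Lz : ∀ i j k l m n r s : ℕ,
    FW α a₁ a₂ a₃ x y z w i j k l m n r s * z
      = FW α a₁ a₂ a₃ x y z w i j k l m n (r+1) s := by
  intro i j k l m n r s
  simp only [FW, mul_assoc]
  rw [((hw z).pow_left s).eq]
  rw [← mul_assoc (z^r) z, ← pow_succ]

private lemma Lw : ∀ i j k l m n r s : ℕ,
    FW α a₁ a₂ a₃ x y z w i j k l m n r s * w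
      = FW α a₁ a₂ a₃ x y z w i j k l m n r (s+1) := by
  intro i j k l m n r s
  simp only [FW, mul_assoc]
  rw [← pow_succ]

end More


set_option maxHeartbeats 1000000 in
/-- The commutator subgroup of `W₂` is generated by `{x, y, z, w, α₂}` and the center of
`W₂` is generated by `{α^p, x, y, z, w}`. -/
theorem stmt_11 (p : ℕ) (hp : p.Prime) (hodd : Odd p)
    (W : Type) [Group W] (α a₁ a₂ a₃ x y z w : W)
    (hW : IsW2 p W α a₁ a₂ a₃ x y z w) :
    commutator W = Subgroup.closure {x, y, z, w, a₂} ∧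
    Subgroup.center W = Subgroup.closure {α ^ p, x, y, z, w} := by
  obtain ⟨htop, hcard, hr1, hr2, hr3, hr4, hr5, hr6, hαq, h1p, h2p, h3p, hxp, hyp, hzp, hwp, hcen⟩ := hW
  have hp1 : 1 ≤ p := hp.one_le
  haveI : NeZero p := ⟨hp.pos.ne'⟩
  haveI : NeZero (p ^ 2) := ⟨pow_ne_zero 2 hp.pos.ne'⟩
  haveI : Finite W := (Nat.card_pos_iff.mp (by rw [hcard]; positivity)).2
  set S : Set W := {α, a₁, a₂, a₃, x, y, z, w} with hS
  -- centrality of x, y, z, w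
  have hx : ∀ g : W, Commute x g := commute_all htop (fun s hs => hcen x (by simp) s hs)
  have hy : ∀ g : W, Commute y g := commute_all htop (fun s hs => hcen y (by simp) s hs)
  have hz : ∀ g : W, Commute z g := commute_all htop (fun s hs => hcen z (by simp) s hs)
  have hw : ∀ g : W, Commute w g := commute_all htop (fun s hs => hcen w (by simp) s hs)
  -- relations in product form
  have r1 : a₁ * α = α * (a₁ * a₂) := by rw [← hr1]; simp only [pcomm]; group
  have r2o : a₁ * a₂ = a₂ * (a₁ * x) := by rw [← hr2]; simp only [pcomm]; group
  have r2' : a₂ * a₁ = a₁ * (a₂ * x⁻¹) := by rw [← hr2]; simp only [pcomm]; group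
  have r3o : α * a₂ = a₂ * (α * y) := by rw [← hr3]; simp only [pcomm]; group
  have r3' : a₂ * α = α * (a₂ * y⁻¹) := by rw [← hr3]; simp only [pcomm]; group
  have r4o : a₃ * a₁ = a₁ * (a₃ * z) := by rw [← hr4]; simp only [pcomm]; group
  have r5o : a₃ * α = α * (a₃ * w) := by rw [← hr5]; simp only [pcomm]; group
  have r6o : a₃ * a₂ = a₂ * a₃ := by
    have h := hr6; simp only [pcomm] at h
    have := congrArg (fun t => a₂ * (a₃ * t)) h
    symm; simpa [mul_assoc] using this.symm
  have hxinv : x⁻¹ = x ^ (p - 1) := by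
    symm; apply eq_inv_of_mul_eq_one_left; rw [← pow_succ, show p - 1 + 1 = p from Nat.succ_pred_eq_of_pos hp1, hxp]
  have hyinv : y⁻¹ = y ^ (p - 1) := by
    symm; apply eq_inv_of_mul_eq_one_left; rw [← pow_succ, show p - 1 + 1 = p from Nat.succ_pred_eq_of_pos hp1, hyp]
  have r2'' : a₂ * a₁ = a₁ * (a₂ * x ^ (p - 1)) := by rw [← hxinv]; exact r2'
  have r3'' : a₂ * α = α * (a₂ * y ^ (p - 1)) := by rw [← hyinv]; exact r3'

  -- the set of normal forms
  set T : Set W := {g | ∃ i j k l m n r s : ℕ, FW α a₁ a₂ a₃ x y z w i j k l m n r s = g} with hTdef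
  have htα : ∀ g ∈ T, g * α ∈ T := by
    rintro g ⟨i, j, k, l, m, n, r, s, rfl⟩
    exact ⟨_, _, _, _, _, _, _, _, (Lα hx hy hz hw r1 r2'' r3'' r4o r5o r6o i j k l m n r s).symm⟩
  have hta1 : ∀ g ∈ T, g * a₁ ∈ T := by
    rintro g ⟨i, j, k, l, m, n, r, s, rfl⟩
    exact ⟨_, _, _, _, _, _, _, _, (La1 hx hy hz hw r2'' r4o i j k l m n r s).symm⟩
  have hta2 : ∀ g ∈ T, g * a₂ ∈ T := by
    rintro g ⟨i, j, k, l, m, n, r, s, rfl⟩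
    exact ⟨_, _, _, _, _, _, _, _, (La2 hx hy hz hw r6o i j k l m n r s).symm⟩
  have hta3 : ∀ g ∈ T, g * a₃ ∈ T := by
    rintro g ⟨i, j, k, l, m, n, r, s, rfl⟩
    exact ⟨_, _, _, _, _, _, _, _, (La3 hx hy hz hw i j k l m n r s).symm⟩
  have htx : ∀ g ∈ T, g * x ∈ T := by
    rintro g ⟨i, j, k, l, m, n, r, s, rfl⟩
    exact ⟨_, _, _, _, _, _, _, _, (Lx hx hy hz hw i j k l m n r s).symm⟩
  have hty : ∀ g ∈ T, g * y ∈ T := by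
    rintro g ⟨i, j, k, l, m, n, r, s, rfl⟩
    exact ⟨_, _, _, _, _, _, _, _, (Ly hx hy hz hw i j k l m n r s).symm⟩
  have htz : ∀ g ∈ T, g * z ∈ T := by
    rintro g ⟨i, j, k, l, m, n, r, s, rfl⟩
    exact ⟨_, _, _, _, _, _, _, _, (Lz hw i j k l m n r s).symm⟩
  have htw : ∀ g ∈ T, g * w ∈ T := by
    rintro g ⟨i, j, k, l, m, n, r, s, rfl⟩
    exact ⟨_, _, _, _, _, _, _, _, (Lw i j k l m n r s).symm⟩
  have pα := closed_pow htα
  have p1 := closed_pow hta1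
  have p2 := closed_pow hta2
  have p3 := closed_pow hta3
  have px := closed_pow htx
  have py := closed_pow hty
  have pz := closed_pow htz
  have pw := closed_pow htw
  have h1T : (1 : W) ∈ T := ⟨0, 0, 0, 0, 0, 0, 0, 0, by simp [FW]⟩
  have hT : ∀ g : W, g ∈ T := by
    intro g
    have hg : g ∈ Subgroup.closure S := htop ▸ Subgroup.mem_top g
    induction hg using Subgroup.closure_induction with
    | mem s hs =>
      simp only [hS, Set.mem_insert_iff, Set.mem_singleton_iff] at hs
      rcases hs with rfl | rfl | rfl | rfl | rfl | rfl | rfl | rfl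
      · exact ⟨1, 0, 0, 0, 0, 0, 0, 0, by simp [FW]⟩
      · exact ⟨0, 1, 0, 0, 0, 0, 0, 0, by simp [FW]⟩
      · exact ⟨0, 0, 1, 0, 0, 0, 0, 0, by simp [FW]⟩
      · exact ⟨0, 0, 0, 1, 0, 0, 0, 0, by simp [FW]⟩
      · exact ⟨0, 0, 0, 0, 1, 0, 0, 0, by simp [FW]⟩
      · exact ⟨0, 0, 0, 0, 0, 1, 0, 0, by simp [FW]⟩
      · exact ⟨0, 0, 0, 0, 0, 0, 1, 0, by simp [FW]⟩
      · exact ⟨0, 0, 0, 0, 0, 0, 0, 1, by simp [FW]⟩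
    | one => exact h1T
    | mul u v _ _ hu hv => ?_
    | inv u _ hu => ?_
    · obtain ⟨i, j, k, l, m, n, r, s, rfl⟩ := hv
      simp only [FW, ← mul_assoc]
      exact pw _ (pz _ (py _ (px _ (p3 _ (p2 _ (p1 _ (pα _ hu i) j) k) l) m) n) r) s
    · obtain ⟨i, j, k, l, m, n, r, s, rfl⟩ := hu
      have hq1 : 1 ≤ p ^ 2 := Nat.one_le_pow _ _ hp.pos
      have : (FW α a₁ a₂ a₃ x y z w i j k l m n r s)⁻¹
          = 1 * w ^ ((p-1)*s) * z ^ ((p-1)*r) * y ^ ((p-1)*n) * x ^ ((p-1)*m)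
            * a₃ ^ ((p-1)*l) * a₂ ^ ((p-1)*k) * a₁ ^ ((p-1)*j) * α ^ ((p^2-1)*i) := by
        simp only [FW, mul_inv_rev]
        rw [inv_pow_eq_s11 hαq hq1, inv_pow_eq_s11 h1p hp1, inv_pow_eq_s11 h2p hp1, inv_pow_eq_s11 h3p hp1,
          inv_pow_eq_s11 hxp hp1, inv_pow_eq_s11 hyp hp1, inv_pow_eq_s11 hzp hp1, inv_pow_eq_s11 hwp hp1]
        simp only [mul_assoc, one_mul]
      rw [this]
      exact pα _ (p1 _ (p2 _ (p3 _ (px _ (py _ (pz _ (pw _ h1T _) _) _) _) _) _) _) _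

  -- reduction of exponents and injectivity
  have hred : ∀ i j k l m n r s : ℕ, FW α a₁ a₂ a₃ x y z w i j k l m n r s
      = FW α a₁ a₂ a₃ x y z w (i % p ^ 2) (j % p) (k % p) (l % p) (m % p) (n % p) (r % p) (s % p) := by
    intro i j k l m n r s
    simp only [FW]
    rw [pow_reduce hαq i, pow_reduce h1p j, pow_reduce h2p k, pow_reduce h3p l,
      pow_reduce hxp m, pow_reduce hyp n, pow_reduce hzp r, pow_reduce hwp s]
  have hbij : Function.Bijective
      (fun v : ZMod (p ^ 2) × ZMod p × ZMod p × ZMod p × ZMod p × ZMod p × ZMod p × ZMod p =>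
        FW α a₁ a₂ a₃ x y z w v.1.val v.2.1.val v.2.2.1.val v.2.2.2.1.val v.2.2.2.2.1.val
          v.2.2.2.2.2.1.val v.2.2.2.2.2.2.1.val v.2.2.2.2.2.2.2.val) := by
    rw [Nat.bijective_iff_surjective_and_card]
    constructor
    · intro g
      obtain ⟨i, j, k, l, m, n, r, s, rfl⟩ := hT g
      refine ⟨(↑i, ↑j, ↑k, ↑l, ↑m, ↑n, ↑r, ↑s), ?_⟩
      simp only [ZMod.val_natCast]
      exact (hred i j k l m n r s).symm
    · rw [hcard]
      simp only [Nat.card_prod, Nat.card_zmod]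
      ring
  have hcongr : ∀ i j k l m n r s i' j' k' l' m' n' r' s' : ℕ,
      FW α a₁ a₂ a₃ x y z w i j k l m n r s = FW α a₁ a₂ a₃ x y z w i' j' k' l' m' n' r' s' →
      ((i : ZMod (p ^ 2)) = ↑i' ∧ (j : ZMod p) = ↑j' ∧ (k : ZMod p) = ↑k' ∧ (l : ZMod p) = ↑l'
        ∧ (m : ZMod p) = ↑m' ∧ (n : ZMod p) = ↑n' ∧ (r : ZMod p) = ↑r' ∧ (s : ZMod p) = ↑s') := by
    intro i j k l m n r s i' j' k' l' m' n' r' s' heq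
    have key := hbij.injective (a₁ := (↑i, ↑j, ↑k, ↑l, ↑m, ↑n, ↑r, ↑s))
      (a₂ := (↑i', ↑j', ↑k', ↑l', ↑m', ↑n', ↑r', ↑s')) (by
        show FW α a₁ a₂ a₃ x y z w _ _ _ _ _ _ _ _ = FW α a₁ a₂ a₃ x y z w _ _ _ _ _ _ _ _
        simp only [ZMod.val_natCast]
        rw [← hred, ← hred]
        exact heq)
    simpa only [Prod.mk.injEq] using key

  -- slides of single generators across powers of α
  have s6 : ∀ e : ℕ, a₁ * α ^ e = α ^ e * (a₁ * (a₂ ^ e * (y ^ (p-1)) ^ (e.choose 2))) :=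
    slideB r1 r3'' ((hy α).pow_left (p-1)) ((hy a₂).pow_left (p-1))
  have s7 : ∀ e : ℕ, a₂ * α ^ e = α ^ e * (a₂ * (y ^ (p-1)) ^ e) :=
    slide2 r3'' ((hy α).pow_left (p-1))
  have s8 : ∀ e : ℕ, a₃ * α ^ e = α ^ e * (a₃ * w ^ e) := slide2 r5o (hw α)
  -- α ^ p is central
  have hpC : p ∣ p.choose 2 := by
    have h2 : 2 ∣ p - 1 := (Nat.Odd.sub_odd hodd odd_one).two_dvd
    exact ⟨(p - 1) / 2, by rw [Nat.choose_two_right, Nat.mul_div_assoc p h2]⟩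
  have hyC : (y ^ (p-1)) ^ (p.choose 2) = 1 := by
    obtain ⟨c2, hc2⟩ := hpC
    rw [hc2, ← pow_mul, show (p - 1) * (p * c2) = p * ((p - 1) * c2) by ring, pow_mul, hyp,
      one_pow]
  have hαpc : ∀ g : W, Commute (α ^ p) g := by
    apply commute_all htop
    intro t ht
    simp only [hS, Set.mem_insert_iff, Set.mem_singleton_iff] at ht
    rcases ht with h | h | h | h | h | h | h | h <;> rw [h]
    · exact (Commute.refl α).pow_left p
    · refine Commute.symm ?_
      show a₁ * α ^ p = α ^ p * a₁
      rw [s6 p, h2p, one_mul, hyC, mul_one]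
    · refine Commute.symm ?_
      show a₂ * α ^ p = α ^ p * a₂
      rw [s7 p, ← pow_mul, show (p - 1) * p = p * (p - 1) by ring, pow_mul, hyp, one_pow, mul_one]
    · refine Commute.symm ?_
      show a₃ * α ^ p = α ^ p * a₃
      rw [s8 p, hwp, mul_one]
    · exact (hx (α ^ p)).symm
    · exact (hy (α ^ p)).symm
    · exact (hz (α ^ p)).symm
    · exact (hw (α ^ p)).symm
  have hZ0le : Subgroup.closure {α ^ p, x, y, z, w} ≤ Subgroup.center W := by
    rw [Subgroup.closure_le]
    intro t ht
    simp only [Set.mem_insert_iff, Set.mem_singleton_iff] at ht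
    rcases ht with rfl | rfl | rfl | rfl | rfl
    · exact Subgroup.mem_center_iff.mpr fun g => ((hαpc g).symm).eq
    · exact Subgroup.mem_center_iff.mpr fun g => ((hx g).symm).eq
    · exact Subgroup.mem_center_iff.mpr fun g => ((hy g).symm).eq
    · exact Subgroup.mem_center_iff.mpr fun g => ((hz g).symm).eq
    · exact Subgroup.mem_center_iff.mpr fun g => ((hw g).symm).eq
  have Lα0 : ∀ i j k l m n r s : ℕ, α * FW α a₁ a₂ a₃ x y z w i j k l m n r s
      = FW α a₁ a₂ a₃ x y z w (i+1) j k l m n r s := by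
    intro i j k l m n r s
    simp only [FW, ← mul_assoc, ← pow_succ']
  have hZle : Subgroup.center W ≤ Subgroup.closure {α ^ p, x, y, z, w} := by
    intro g hg
    obtain ⟨i, j, k, l, m, n, r, s, rfl⟩ := hT g
    have hc := Subgroup.mem_center_iff.mp hg α
    rw [Lα0 i j k l m n r s, Lα hx hy hz hw r1 r2'' r3'' r4o r5o r6o i j k l m n r s] at hc
    obtain ⟨-, -, e3, -, -, e6, -, e8⟩ := hcongr _ _ _ _ _ _ _ _ _ _ _ _ _ _ _ _ hc
    have hpm1 : ((p - 1 : ℕ) : ZMod p) = -1 := by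
      rw [Nat.cast_sub hp1]; simp
    have hj0 : (j : ZMod p) = 0 := by
      push_cast at e3; linear_combination -e3
    have hk0 : (k : ZMod p) = 0 := by
      push_cast [hpm1] at e6; linear_combination e6
    have hl0 : (l : ZMod p) = 0 := by
      push_cast at e8; linear_combination -e8
    obtain ⟨j', rfl⟩ := (ZMod.natCast_eq_zero_iff j p).mp hj0
    obtain ⟨k', rfl⟩ := (ZMod.natCast_eq_zero_iff k p).mp hk0
    obtain ⟨l', rfl⟩ := (ZMod.natCast_eq_zero_iff l p).mp hl0
    have hg' : FW α a₁ a₂ a₃ x y z w i (p * j') (p * k') (p * l') m n r s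
        = FW α a₁ a₂ a₃ x y z w i 0 0 0 m n r s := by
      simp only [FW, pow_mul, h1p, h2p, h3p, one_pow, pow_zero, one_mul]
    rw [hg'] at hg ⊢
    have hb := Subgroup.mem_center_iff.mp hg a₁
    have lhsB : a₁ * FW α a₁ a₂ a₃ x y z w i 0 0 0 m n r s
        = FW α a₁ a₂ a₃ x y z w i 1 i 0 m ((p-1) * (i.choose 2) + n) r s := by
      simp only [FW, pow_zero, one_mul, pow_one]
      rw [← mul_assoc, s6 i]
      simp only [mul_assoc, ← pow_mul]
      rw [hpoint ((hy (x ^ m)).pow_left ((p-1) * (i.choose 2))).eq]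
      rw [← mul_assoc (y ^ ((p-1) * (i.choose 2))) (y ^ n), ← pow_add]
    have rhsB := La1 (α := α) hx hy hz hw r2'' r4o i 0 0 0 m n r s
    rw [lhsB, rhsB] at hb
    obtain ⟨-, -, f3, -, -, -, -, -⟩ := hcongr _ _ _ _ _ _ _ _ _ _ _ _ _ _ _ _ hb
    have hi0 : (i : ZMod p) = 0 := by push_cast at f3; linear_combination f3
    obtain ⟨i', rfl⟩ := (ZMod.natCast_eq_zero_iff i p).mp hi0
    show FW α a₁ a₂ a₃ x y z w (p * i') 0 0 0 m n r s ∈ _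
    simp only [FW, pow_zero, one_mul, pow_mul]
    refine mul_mem (pow_mem (Subgroup.subset_closure (by simp)) i')
      (mul_mem (pow_mem (Subgroup.subset_closure (by simp)) m)
        (mul_mem (pow_mem (Subgroup.subset_closure (by simp)) n)
          (mul_mem (pow_mem (Subgroup.subset_closure (by simp)) r)
            (pow_mem (Subgroup.subset_closure (by simp)) s))))

  -- the commutator subgroup
  set N : Subgroup W := Subgroup.closure ({x, y, z, w, a₂} : Set W) with hN
  have hxN : x ∈ N := Subgroup.subset_closure (by simp)
  have hyN : y ∈ N := Subgroup.subset_closure (by simp)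
  have hzN : z ∈ N := Subgroup.subset_closure (by simp)
  have hwN : w ∈ N := Subgroup.subset_closure (by simp)
  have ha2N : a₂ ∈ N := Subgroup.subset_closure (by simp)
  open scoped commutatorElement in
  have hrep : ∀ u v : W, ⁅u⁻¹, v⁻¹⁆ = pcomm u v := by
    intro u v; simp only [commutatorElement_def, pcomm, inv_inv]
  have hNle : N ≤ commutator W := by
    rw [hN, Subgroup.closure_le]
    intro t ht
    simp only [Set.mem_insert_iff, Set.mem_singleton_iff] at ht
    rw [SetLike.mem_coe, commutator_def]
    rcases ht with h | h | h | h | h <;> rw [h]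
    · rw [← hr2, ← hrep]
      exact Subgroup.commutator_mem_commutator (Subgroup.mem_top _) (Subgroup.mem_top _)
    · rw [← hr3, ← hrep]
      exact Subgroup.commutator_mem_commutator (Subgroup.mem_top _) (Subgroup.mem_top _)
    · rw [← hr4, ← hrep]
      exact Subgroup.commutator_mem_commutator (Subgroup.mem_top _) (Subgroup.mem_top _)
    · rw [← hr5, ← hrep]
      exact Subgroup.commutator_mem_commutator (Subgroup.mem_top _) (Subgroup.mem_top _)
    · rw [← hr1, ← hrep]
      exact Subgroup.commutator_mem_commutator (Subgroup.mem_top _) (Subgroup.mem_top _)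
  -- conjugation facts
  have hcj1 : ∀ (g t : W), Commute t g → g * t * g⁻¹ = t := by
    intro g t hc; rw [← hc.eq]; group
  have hcj2 : ∀ (g t : W), Commute t g → g⁻¹ * t * g = t := by
    intro g t hc; rw [mul_assoc, hc.eq]; group
  have cA1 : α * a₂ * α⁻¹ = a₂ * y := by rw [r3o, ← (hy α).eq]; group
  have cA2 : α⁻¹ * a₂ * α = a₂ * y⁻¹ := by rw [mul_assoc, r3']; group
  have cB1 : a₁ * a₂ * a₁⁻¹ = a₂ * x := by rw [r2o, ← (hx a₁).eq]; group
  have cB2 : a₁⁻¹ * a₂ * a₁ = a₂ * x⁻¹ := by rw [mul_assoc, r2']; group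
  have cC1 : a₃ * a₂ * a₃⁻¹ = a₂ := hcj1 a₃ a₂ (show Commute a₃ a₂ from r6o).symm
  have cC2 : a₃⁻¹ * a₂ * a₃ = a₂ := hcj2 a₃ a₂ (show Commute a₃ a₂ from r6o).symm
  have lift : ∀ g : W, (∀ t ∈ ({x, y, z, w, a₂} : Set W), g * t * g⁻¹ ∈ N) →
      ∀ t ∈ N, g * t * g⁻¹ ∈ N := by
    intro g hbase t ht
    rw [hN] at ht
    induction ht using Subgroup.closure_induction with
    | mem u hu => exact hbase u hu
    | one => simpa using one_mem N
    | mul u v hu hv ihu ihv =>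
      have e : g * (u * v) * g⁻¹ = (g * u * g⁻¹) * (g * v * g⁻¹) := by group
      rw [e]; exact mul_mem ihu ihv
    | inv u hu ihu =>
      have e : g * u⁻¹ * g⁻¹ = (g * u * g⁻¹)⁻¹ := by group
      rw [e]; exact inv_mem ihu
  have hmain : ∀ g : W, (∀ t ∈ ({x, y, z, w, a₂} : Set W), g * t * g⁻¹ ∈ N)
      ∧ (∀ t ∈ ({x, y, z, w, a₂} : Set W), g⁻¹ * t * g ∈ N) := by
    intro g
    have hg : g ∈ Subgroup.closure S := htop ▸ Subgroup.mem_top g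
    induction hg using Subgroup.closure_induction with
    | mem u hu => ?_
    | one =>
      exact ⟨fun t ht => by simpa using Subgroup.subset_closure ht,
             fun t ht => by simpa using Subgroup.subset_closure ht⟩
    | mul u v hu hv ihu ihv =>
      constructor
      · intro t ht
        have e : (u * v) * t * (u * v)⁻¹ = u * (v * t * v⁻¹) * u⁻¹ := by group
        rw [e]; exact lift u ihu.1 _ (ihv.1 t ht)
      · intro t ht
        have e : (u * v)⁻¹ * t * (u * v) = v⁻¹ * (u⁻¹ * t * u) * (v⁻¹)⁻¹ := by group
        rw [e]
        refine lift v⁻¹ (fun t' ht' => ?_) _ (ihu.2 t ht)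
        rw [inv_inv]; exact ihv.2 t' ht'
    | inv u hu ihu =>
      refine ⟨fun t ht => ?_, fun t ht => ?_⟩
      · rw [show u⁻¹ * t * (u⁻¹)⁻¹ = u⁻¹ * t * u by rw [inv_inv]]; exact ihu.2 t ht
      · rw [show (u⁻¹)⁻¹ * t * u⁻¹ = u * t * u⁻¹ by rw [inv_inv]]; exact ihu.1 t ht
    simp only [hS, Set.mem_insert_iff, Set.mem_singleton_iff] at hu
    constructor <;> intro t ht <;>
      simp only [Set.mem_insert_iff, Set.mem_singleton_iff] at ht <;>
      rcases hu with h | h | h | h | h | h | h | h <;> rw [h] <;>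
      rcases ht with h' | h' | h' | h' | h' <;> rw [h'] <;>
      first
      | (rw [hcj1 _ _ (hx _)]; exact hxN)
      | (rw [hcj1 _ _ (hy _)]; exact hyN)
      | (rw [hcj1 _ _ (hz _)]; exact hzN)
      | (rw [hcj1 _ _ (hw _)]; exact hwN)
      | (rw [hcj2 _ _ (hx _)]; exact hxN)
      | (rw [hcj2 _ _ (hy _)]; exact hyN)
      | (rw [hcj2 _ _ (hz _)]; exact hzN)
      | (rw [hcj2 _ _ (hw _)]; exact hwN)
      | (rw [hcj1 _ _ ((hx _).symm)]; exact ha2N)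
      | (rw [hcj1 _ _ ((hy _).symm)]; exact ha2N)
      | (rw [hcj1 _ _ ((hz _).symm)]; exact ha2N)
      | (rw [hcj1 _ _ ((hw _).symm)]; exact ha2N)
      | (rw [hcj2 _ _ ((hx _).symm)]; exact ha2N)
      | (rw [hcj2 _ _ ((hy _).symm)]; exact ha2N)
      | (rw [hcj2 _ _ ((hz _).symm)]; exact ha2N)
      | (rw [hcj2 _ _ ((hw _).symm)]; exact ha2N)
      | (rw [hcj1 _ _ (Commute.refl a₂)]; exact ha2N)
      | (rw [hcj2 _ _ (Commute.refl a₂)]; exact ha2N)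
      | (rw [cA1]; exact mul_mem ha2N hyN)
      | (rw [cA2]; exact mul_mem ha2N (inv_mem hyN))
      | (rw [cB1]; exact mul_mem ha2N hxN)
      | (rw [cB2]; exact mul_mem ha2N (inv_mem hxN))
      | (rw [cC1]; exact ha2N)
      | (rw [cC2]; exact ha2N)
  haveI hNn : N.Normal := ⟨fun n hn g => lift g (hmain g).1 n hn⟩
  set π := QuotientGroup.mk' N with hπdef
  have hNpc : ∀ u v : W, pcomm u v ∈ N → Commute (π u) (π v) := by
    intro u v h
    have key : u * v = (v * u) * pcomm u v := by simp only [pcomm]; group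
    have hone : π (pcomm u v) = 1 := (QuotientGroup.eq_one_iff _).mpr h
    show π u * π v = π v * π u
    rw [← map_mul, ← map_mul, key, map_mul, hone, mul_one]
  have hswap_mem : ∀ u v : W, pcomm u v ∈ N → pcomm v u ∈ N := by
    intro u v h
    have e : pcomm v u = (pcomm u v)⁻¹ := by simp only [pcomm]; group
    rw [e]; exact inv_mem h
  have hcomm_mem : ∀ u v : W, Commute u v → pcomm u v ∈ N := by
    intro u v h
    have e : pcomm u v = 1 := by simp only [pcomm, mul_assoc]; rw [h.eq]; simp
    rw [e]; exact one_mem N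
  have hbasepc : ∀ u ∈ S, ∀ v ∈ S, pcomm u v ∈ N := by
    intro u hu v hv
    simp only [hS, Set.mem_insert_iff, Set.mem_singleton_iff] at hu hv
    rcases hu with h | h | h | h | h | h | h | h <;> rw [h] <;>
      rcases hv with h' | h' | h' | h' | h' | h' | h' | h' <;> rw [h'] <;>
      first
      | exact hcomm_mem _ _ (Commute.refl _)
      | exact hcomm_mem _ _ (hx _)
      | exact hcomm_mem _ _ (hy _)
      | exact hcomm_mem _ _ (hz _)
      | exact hcomm_mem _ _ (hw _)
      | exact hcomm_mem _ _ ((hx _).symm)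
      | exact hcomm_mem _ _ ((hy _).symm)
      | exact hcomm_mem _ _ ((hz _).symm)
      | exact hcomm_mem _ _ ((hw _).symm)
      | (rw [hr1]; exact ha2N)
      | (rw [hr2]; exact hxN)
      | (rw [hr3]; exact hyN)
      | (rw [hr4]; exact hzN)
      | (rw [hr5]; exact hwN)
      | (rw [hr6]; exact one_mem N)
      | exact hswap_mem _ _ (by rw [hr1]; exact ha2N)
      | exact hswap_mem _ _ (by rw [hr2]; exact hxN)
      | exact hswap_mem _ _ (by rw [hr3]; exact hyN)
      | exact hswap_mem _ _ (by rw [hr4]; exact hzN)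
      | exact hswap_mem _ _ (by rw [hr5]; exact hwN)
      | exact hswap_mem _ _ (by rw [hr6]; exact one_mem N)
  have hπ : ∀ u v : W, Commute (π u) (π v) := by
    intro u v
    have hu : u ∈ Subgroup.closure S := htop ▸ Subgroup.mem_top u
    have hv : v ∈ Subgroup.closure S := htop ▸ Subgroup.mem_top v
    induction hu using Subgroup.closure_induction with
    | mem u' hu' =>
      induction hv using Subgroup.closure_induction with
      | mem t ht => exact hNpc _ _ (hbasepc u' hu' t ht)
      | one => rw [map_one]; exact Commute.one_right _
      | mul a b _ _ iha ihb => rw [map_mul]; exact iha.mul_right ihb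
      | inv a _ iha => rw [map_inv]; exact iha.inv_right
    | one => rw [map_one]; exact Commute.one_left _
    | mul a b _ _ iha ihb => rw [map_mul]; exact iha.mul_left ihb
    | inv a _ iha => rw [map_inv]; exact iha.inv_left
  have hCle : commutator W ≤ N := by
    rw [commutator_def, Subgroup.commutator_le]
    intro g _ h _
    open scoped commutatorElement in
    have hone : π ⁅g, h⁆ = 1 := by
      rw [map_commutatorElement]
      exact commutatorElement_eq_one_iff_commute.mpr (hπ g h)
    rw [hπdef, QuotientGroup.mk'_apply, QuotientGroup.eq_one_iff] at hone
    exact hone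
  exact ⟨le_antisymm hCle hNle, le_antisymm hZle hZ0le⟩
end

section
/- In the group W₁, for all integers i, j, e, f the conjugation identity (xⁱ yʲ)(αᵉ z^f)(y^{−j} x^{−i}) = αᵉ z^f α₁^{i·f} α₂^{j·f} α₃^{i·e} α₄^{j·e} holds. -/
/-- If `c` is central and `u * v * u⁻¹ = v * c`, then `uⁿ v u⁻ⁿ = v cⁿ`. -/
lemma conj_zpow_of_central {G : Type*} [Group G] (u v c : G)
    (hc : ∀ g : G, c * g = g * c) (h : u * v * u⁻¹ = v * c) :
    ∀ n : ℤ, u ^ n * v * u ^ (-n) = v * c ^ n := by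
  have h' : u⁻¹ * v * u = v * c⁻¹ := by
    have e : u⁻¹ * (u * v * u⁻¹) * u = v := by group
    rw [h] at e
    have e2 : u⁻¹ * (v * c) * u = u⁻¹ * v * (c * u) := by group
    rw [hc u] at e2
    have e3 : u⁻¹ * v * (u * c) = u⁻¹ * v * u * c := by group
    rw [e2, e3] at e
    calc u⁻¹ * v * u = u⁻¹ * v * u * c * c⁻¹ := by group
      _ = v * c⁻¹ := by rw [e]
  intro n
  induction n using Int.induction_on with
  | zero => simp
  | succ k ih =>
      have e1 : u ^ ((k : ℤ) + 1) * v * u ^ (-((k : ℤ) + 1)) =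
          u ^ (k : ℤ) * (u * v * u⁻¹) * u ^ (-(k : ℤ)) := by group
      rw [e1, h]
      calc u ^ (k : ℤ) * (v * c) * u ^ (-(k : ℤ))
          = u ^ (k : ℤ) * v * (c * u ^ (-(k : ℤ))) := by group
        _ = u ^ (k : ℤ) * v * (u ^ (-(k : ℤ)) * c) := by rw [hc]
        _ = (u ^ (k : ℤ) * v * u ^ (-(k : ℤ))) * c := by group
        _ = v * c ^ (k : ℤ) * c := by rw [ih]
        _ = v * c ^ ((k : ℤ) + 1) := by group
  | pred k ih =>
      have e1 : u ^ (-(k : ℤ) - 1) * v * u ^ (-(-(k : ℤ) - 1)) =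
          u ^ (-(k : ℤ)) * (u⁻¹ * v * u) * u ^ (-(-(k : ℤ))) := by group
      rw [e1, h']
      calc u ^ (-(k : ℤ)) * (v * c⁻¹) * u ^ (-(-(k : ℤ)))
          = u ^ (-(k : ℤ)) * v * (c⁻¹ * u ^ (-(-(k : ℤ)))) := by group
        _ = u ^ (-(k : ℤ)) * v * (u ^ (-(-(k : ℤ))) * c⁻¹) := by
            rw [((show Commute c (u ^ (-(-(k : ℤ)))) from hc _).inv_left).eq]
        _ = (u ^ (-(k : ℤ)) * v * u ^ (-(-(k : ℤ)))) * c⁻¹ := by group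
        _ = v * c ^ (-(k : ℤ)) * c⁻¹ := by rw [ih]
        _ = v * c ^ (-(k : ℤ) - 1) := by group

/-- If `c` is central and `u * v * u⁻¹ = v * c`, then `uᵐ vⁿ u⁻ᵐ = vⁿ c^(m·n)`. -/
lemma conj_zpow_zpow_of_central {G : Type*} [Group G] (u v c : G)
    (hc : ∀ g : G, c * g = g * c) (h : u * v * u⁻¹ = v * c) :
    ∀ m n : ℤ, u ^ m * v ^ n * u ^ (-m) = v ^ n * c ^ (m * n) := by
  intro m n
  have h1 := conj_zpow_of_central u v c hc h m
  have h2 : u ^ m * v ^ n * u ^ (-m) = (u ^ m * v * u ^ (-m)) ^ n := by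
    rw [zpow_neg, conj_zpow]
  rw [h2, h1, ((show Commute c v from hc v).symm.zpow_right m).mul_zpow, ← zpow_mul]

/-- Swap a power of a central element past any power. -/
lemma central_zpow_swap {G : Type*} [Group G] (c g : G)
    (hc : ∀ h : G, c * h = h * c) (m n : ℤ) : c ^ m * g ^ n = g ^ n * c ^ m :=
  (((show Commute c g from hc g).zpow_right n).zpow_left m).eq

/-- In `W₁`, for all integers `i, j, e, f` one has
`(xⁱ yʲ)(αᵉ z^f)(y⁻ʲ x⁻ⁱ) = αᵉ z^f α₁^(i·f) α₂^(j·f) α₃^(i·e) α₄^(j·e)`. -/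
theorem stmt_12 (p : ℕ) (hp : p.Prime) (hodd : Odd p)
    (W : Type) [Group W] (x y z α a₁ a₂ a₃ a₄ : W)
    (hW : IsW1 p W x y z α a₁ a₂ a₃ a₄) :
    ∀ i j e f : ℤ,
      (x ^ i * y ^ j) * (α ^ e * z ^ f) * (y ^ (-j) * x ^ (-i)) =
        α ^ e * z ^ f * a₁ ^ (i * f) * a₂ ^ (j * f) * a₃ ^ (i * e) * a₄ ^ (j * e) := by
  obtain ⟨hcl, -, -, hxz, hyz, hxα, hyα, -, -, -, -, -, -, -, -, -, hcomm⟩ := hW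
  -- centrality of a₁, a₂, a₃, a₄
  have cen : ∀ c ∈ ({a₁, a₂, a₃, a₄} : Set W), ∀ g : W, c * g = g * c := by
    intro c hcmem g
    have hle : Subgroup.closure ({x, y, z, α, a₁, a₂, a₃, a₄} : Set W) ≤
        Subgroup.centralizer {c} := by
      rw [Subgroup.closure_le]
      intro g' hg'
      rw [SetLike.mem_coe, Subgroup.mem_centralizer_iff]
      intro h hh
      rw [Set.mem_singleton_iff] at hh
      subst hh
      exact hcomm _ hcmem g' hg'
    have hg : g ∈ Subgroup.centralizer ({c} : Set W) :=
      hle (by rw [hcl]; exact Subgroup.mem_top g)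
    exact Subgroup.mem_centralizer_iff.mp hg c rfl
  have hc1 : ∀ g : W, a₁ * g = g * a₁ := cen a₁ (by simp)
  have hc2 : ∀ g : W, a₂ * g = g * a₂ := cen a₂ (by simp)
  have hc3 : ∀ g : W, a₃ * g = g * a₃ := cen a₃ (by simp)
  have hc4 : ∀ g : W, a₄ * g = g * a₄ := cen a₄ (by simp)
  -- base conjugation relations
  have r1 : x * z * x⁻¹ = z * a₁ := by
    have e0 : x⁻¹ * z⁻¹ * x * z = a₁ := hxz
    have e : x * z = z * x * a₁ := by rw [← e0]; group
    rw [e, show z * x * a₁ * x⁻¹ = z * x * (a₁ * x⁻¹) from by group, hc1 x⁻¹]; group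
  have r2 : y * z * y⁻¹ = z * a₂ := by
    have e0 : y⁻¹ * z⁻¹ * y * z = a₂ := hyz
    have e : y * z = z * y * a₂ := by rw [← e0]; group
    rw [e, show z * y * a₂ * y⁻¹ = z * y * (a₂ * y⁻¹) from by group, hc2 y⁻¹]; group
  have r3 : x * α * x⁻¹ = α * a₃ := by
    have e0 : x⁻¹ * α⁻¹ * x * α = a₃ := hxα
    have e : x * α = α * x * a₃ := by rw [← e0]; group
    rw [e, show α * x * a₃ * x⁻¹ = α * x * (a₃ * x⁻¹) from by group, hc3 x⁻¹]; group
  have r4 : y * α * y⁻¹ = α * a₄ := by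
    have e0 : y⁻¹ * α⁻¹ * y * α = a₄ := hyα
    have e : y * α = α * y * a₄ := by rw [← e0]; group
    rw [e, show α * y * a₄ * y⁻¹ = α * y * (a₄ * y⁻¹) from by group, hc4 y⁻¹]; group
  have H1 := conj_zpow_zpow_of_central x z a₁ hc1 r1
  have H2 := conj_zpow_zpow_of_central y z a₂ hc2 r2
  have H3 := conj_zpow_zpow_of_central x α a₃ hc3 r3
  have H4 := conj_zpow_zpow_of_central y α a₄ hc4 r4
  intro i j e f
  have A : y ^ j * (α ^ e * z ^ f) * y ^ (-j) =
      α ^ e * z ^ f * (a₂ ^ (j * f) * a₄ ^ (j * e)) := by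
    calc y ^ j * (α ^ e * z ^ f) * y ^ (-j)
        = (y ^ j * α ^ e * y ^ (-j)) * (y ^ j * z ^ f * y ^ (-j)) := by group
      _ = (α ^ e * a₄ ^ (j * e)) * (z ^ f * a₂ ^ (j * f)) := by rw [H4, H2]
      _ = α ^ e * (a₄ ^ (j * e) * z ^ f) * a₂ ^ (j * f) := by group
      _ = α ^ e * (z ^ f * a₄ ^ (j * e)) * a₂ ^ (j * f) := by
          rw [central_zpow_swap a₄ z hc4 (j * e) f]
      _ = α ^ e * z ^ f * (a₄ ^ (j * e) * a₂ ^ (j * f)) := by group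
      _ = α ^ e * z ^ f * (a₂ ^ (j * f) * a₄ ^ (j * e)) := by
          rw [central_zpow_swap a₄ a₂ hc4 (j * e) (j * f)]
  calc (x ^ i * y ^ j) * (α ^ e * z ^ f) * (y ^ (-j) * x ^ (-i))
      = x ^ i * (y ^ j * (α ^ e * z ^ f) * y ^ (-j)) * x ^ (-i) := by group
    _ = x ^ i * (α ^ e * z ^ f * (a₂ ^ (j * f) * a₄ ^ (j * e))) * x ^ (-i) := by rw [A]
    _ = x ^ i * (α ^ e * z ^ f) * (a₂ ^ (j * f) * (a₄ ^ (j * e) * x ^ (-i))) := by group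
    _ = x ^ i * (α ^ e * z ^ f) * (a₂ ^ (j * f) * (x ^ (-i) * a₄ ^ (j * e))) := by
        rw [central_zpow_swap a₄ x hc4 (j * e) (-i)]
    _ = x ^ i * (α ^ e * z ^ f) * (a₂ ^ (j * f) * x ^ (-i)) * a₄ ^ (j * e) := by group
    _ = x ^ i * (α ^ e * z ^ f) * (x ^ (-i) * a₂ ^ (j * f)) * a₄ ^ (j * e) := by
        rw [central_zpow_swap a₂ x hc2 (j * f) (-i)]
    _ = (x ^ i * α ^ e * x ^ (-i)) * (x ^ i * z ^ f * x ^ (-i)) * a₂ ^ (j * f) *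
          a₄ ^ (j * e) := by group
    _ = (α ^ e * a₃ ^ (i * e)) * (z ^ f * a₁ ^ (i * f)) * a₂ ^ (j * f) * a₄ ^ (j * e) := by
        rw [H3, H1]
    _ = α ^ e * (a₃ ^ (i * e) * z ^ f) * a₁ ^ (i * f) * a₂ ^ (j * f) * a₄ ^ (j * e) := by
        group
    _ = α ^ e * (z ^ f * a₃ ^ (i * e)) * a₁ ^ (i * f) * a₂ ^ (j * f) * a₄ ^ (j * e) := by
        rw [central_zpow_swap a₃ z hc3 (i * e) f]
    _ = α ^ e * z ^ f * (a₃ ^ (i * e) * a₁ ^ (i * f)) * a₂ ^ (j * f) * a₄ ^ (j * e) := by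
        group
    _ = α ^ e * z ^ f * (a₁ ^ (i * f) * a₃ ^ (i * e)) * a₂ ^ (j * f) * a₄ ^ (j * e) := by
        rw [central_zpow_swap a₃ a₁ hc3 (i * e) (i * f)]
    _ = α ^ e * z ^ f * a₁ ^ (i * f) * (a₃ ^ (i * e) * a₂ ^ (j * f)) * a₄ ^ (j * e) := by
        group
    _ = α ^ e * z ^ f * a₁ ^ (i * f) * (a₂ ^ (j * f) * a₃ ^ (i * e)) * a₄ ^ (j * e) := by
        rw [central_zpow_swap a₃ a₂ hc3 (i * e) (j * f)]
    _ = α ^ e * z ^ f * a₁ ^ (i * f) * a₂ ^ (j * f) * a₃ ^ (i * e) * a₄ ^ (j * e) := by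
        group
end
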